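/- arXiv:2404.08942 — 16 statements merged into one kernel-verified Lean document; each statement's English description precedes it below -/
import Mathlib

section
/- Let a, b ∈ ℂ with |a| = |b| = 1, Im(a) > 0, Im(b) > 0 and a ≠ b. Then sin(v(a,b)) = (|a − b| / |a·b − 1|) · ( |a + b|/2 + √(Im(a)·Im(b)) ). -/
open Complex ComplexConjugate

/-- The visual angle metric of the upper half plane:
`v(a,b) = sup {∠(a,x,b) : x ∈ ℝ}`, where the angle at the real vertex `x`
is `|arg((a−x)/(b−x))|`. -/
lemma eq_of_sq_eq_sq' {x y : ℝ} (hx : 0 ≤ x) (hy : 0 ≤ y) (h : x ^ 2 = y ^ 2) : x = y := by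
  nlinarith [sq_nonneg (x - y), sq_nonneg (x + y)]

lemma abs_arg_le_of_dist_eq {c z : ℂ} {r : ℝ} (hr : 0 ≤ r)
    (hzc : norm (z - c) = r) (hrc : r < norm c) (hre : 0 < c.re) :
    |z.arg| ≤ |c.arg| + Real.arcsin (r / norm c) := by
  have hc0 : c ≠ 0 := by intro h; rw [h] at hre; simp at hre
  have habsc : 0 < norm c := lt_of_le_of_lt hr hrc
  have hzlb : norm c - r ≤ norm z := by
    have h1 : norm c - norm z ≤ norm (c - z) := by
      simpa using norm_sub_norm_le c z
    rw [norm_sub_rev c z, hzc] at h1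
    linarith
  have habsz : 0 < norm z := by linarith
  have hz0 : z ≠ 0 := by
    intro h; rw [h] at habsz; simp at habsz
  have hcirc : (z.re - c.re) ^ 2 + (z.im - c.im) ^ 2 = r ^ 2 := by
    have := Complex.sq_norm (z - c)
    rw [hzc] at this
    simpa [Complex.normSq_apply, Complex.sub_re, Complex.sub_im, sq] using this.symm
  have hnzrw : z.re ^ 2 + z.im ^ 2 = norm z ^ 2 := by
    rw [Complex.sq_norm]; simp [Complex.normSq_apply, sq]
  have hncrw : c.re ^ 2 + c.im ^ 2 = norm c ^ 2 := by
    rw [Complex.sq_norm]; simp [Complex.normSq_apply, sq]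
  have hP : 0 < z.re * c.re + z.im * c.im := by nlinarith
  have hQ : (z.im * c.re - z.re * c.im) ^ 2 ≤ r ^ 2 * norm z ^ 2 := by
    nlinarith [sq_nonneg (z.re ^ 2 + z.im ^ 2 - (norm c ^ 2 - r ^ 2))]
  set A := z.arg with hA
  set C := c.arg with hC
  have hcosz : Real.cos A = z.re / norm z := Complex.cos_arg hz0
  have hsinz : Real.sin A = z.im / norm z := Complex.sin_arg z
  have hcosc : Real.cos C = c.re / norm c := Complex.cos_arg hc0
  have hsinc : Real.sin C = c.im / norm c := Complex.sin_arg c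
  have hcosd : Real.cos (A - C) = (z.re * c.re + z.im * c.im) / (norm z * norm c) := by
    rw [Real.cos_sub, hcosz, hsinz, hcosc, hsinc, div_mul_div_comm, div_mul_div_comm,
      ← add_div]
  have hsind : Real.sin (A - C) = (z.im * c.re - z.re * c.im) / (norm z * norm c) := by
    rw [Real.sin_sub, hcosz, hsinz, hcosc, hsinc, div_mul_div_comm, div_mul_div_comm,
      div_sub_div_same]
  have hcosd_pos : 0 < Real.cos (A - C) := by
    rw [hcosd]; positivity
  have hCsmall : |C| < Real.pi / 2 := Complex.abs_arg_lt_pi_div_two_iff.mpr (Or.inl hre)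
  have hdabs : |A - C| < Real.pi / 2 := by
    by_contra h
    push_neg at h
    have h2 : |A - C| ≤ Real.pi + Real.pi / 2 := by
      have h3 : |A| ≤ Real.pi := Complex.abs_arg_le_pi z
      have h4 : |A - C| ≤ |A| + |C| := abs_sub A C
      linarith [hCsmall.le]
    have h5 := Real.cos_nonpos_of_pi_div_two_le_of_le h h2
    rw [Real.cos_abs] at h5
    linarith
  have hsinabs : |Real.sin (A - C)| ≤ r / norm c := by
    rw [hsind, abs_div]
    rw [abs_of_pos (by positivity : (0:ℝ) < norm z * norm c)]
    have h1 : |z.im * c.re - z.re * c.im| ≤ r * norm z := by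
      nlinarith [_root_.sq_abs (z.im * c.re - z.re * c.im),
        abs_nonneg (z.im * c.re - z.re * c.im), mul_nonneg hr habsz.le]
    calc |z.im * c.re - z.re * c.im| / (norm z * norm c)
        ≤ r * norm z / (norm z * norm c) := by gcongr
      _ = r / norm c := by
          field_simp
  have hd2 : |A - C| ≤ Real.arcsin (r / norm c) := by
    have h1 : Real.sin |A - C| = |Real.sin (A - C)| := by
      rcases abs_cases (A - C) with ⟨h, hge⟩ | ⟨h, hlt⟩
      · rw [h]
        exact (_root_.abs_of_nonneg (Real.sin_nonneg_of_nonneg_of_le_pi hge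
          (by linarith [hdabs, Real.pi_pos]))).symm
      · rw [h, Real.sin_neg]
        have hnp : Real.sin (A - C) ≤ 0 := by
          apply Real.sin_nonpos_of_nonpos_of_neg_pi_le hlt.le
          have h6 := neg_abs_le (A - C)
          linarith [Real.pi_pos]
        exact (abs_of_nonpos hnp).symm
    have h2 : Real.arcsin (Real.sin |A - C|) = |A - C| :=
      Real.arcsin_sin (by linarith [abs_nonneg (A - C), Real.pi_pos]) hdabs.le
    rw [← h2, h1]
    exact Real.monotone_arcsin hsinabs
  calc |A| = |C + (A - C)| := by ring_nf
    _ ≤ |C| + |A - C| := abs_add_le C (A - C)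
    _ ≤ |C| + Real.arcsin (r / norm c) := by linarith

noncomputable def vAngle (a b : ℂ) : ℝ :=
  ⨆ x : ℝ, |((a - (x : ℂ)) / (b - (x : ℂ))).arg|

set_option maxHeartbeats 2000000 in
theorem sin_vAngle_formula (a b : ℂ)
    (ha : ‖a‖ = 1) (hb : ‖b‖ = 1)
    (hia : 0 < a.im) (hib : 0 < b.im) (hab : a ≠ b) :
    Real.sin (vAngle a b) =
      (‖a - b‖ / ‖a * b - 1‖) *
        (‖a + b‖ / 2 + Real.sqrt (a.im * b.im)) := by
  have hna : a.re ^ 2 + a.im ^ 2 = 1 := by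
    have h := Complex.sq_norm a
    rw [ha] at h
    simp [Complex.normSq_apply] at h
    nlinarith
  have hnb : b.re ^ 2 + b.im ^ 2 = 1 := by
    have h := Complex.sq_norm b
    rw [hb] at h
    simp [Complex.normSq_apply] at h
    nlinarith
  set m := norm (a * b - 1) with hm
  set ρ := norm (a - b) with hρdef
  set σ := Real.sqrt (a.im * b.im) with hσdef
  have hσ2 : σ ^ 2 = a.im * b.im := Real.sq_sqrt (by positivity)
  have hσpos : 0 < σ := Real.sqrt_pos.mpr (by positivity)
  have hρ2 : ρ ^ 2 = 2 - 2 * (a.re * b.re) - 2 * (a.im * b.im) := by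
    rw [hρdef, Complex.sq_norm]
    simp [Complex.normSq_apply, Complex.sub_re, Complex.sub_im]
    linear_combination hna + hnb
  have hρpos : 0 < ρ := by
    rw [hρdef]
    exact norm_pos_iff.mpr (sub_ne_zero.mpr hab)
  have hm2 : m ^ 2 = 2 - 2 * (a.re * b.re) + 2 * (a.im * b.im) := by
    rw [hm, Complex.sq_norm]
    simp [Complex.normSq_apply, Complex.sub_re, Complex.sub_im, Complex.mul_re, Complex.mul_im]
    linear_combination (b.re ^ 2 + b.im ^ 2) * hna + hnb
  have hmpos : 0 < m := by
    nlinarith [norm_nonneg (a * b - 1), sq_nonneg (a.re - b.re), hia, hib]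
  have hρm : ρ < m := by nlinarith [hia, hib]
  -- the center of the image circle
  set c : ℂ := (((a.im + b.im) / (2 * b.im) : ℝ) : ℂ) + (((b.re - a.re) / (2 * b.im) : ℝ) : ℂ) * Complex.I with hcdef
  have hcre : c.re = (a.im + b.im) / (2 * b.im) := by
    rw [hcdef]
    simp only [Complex.add_re, Complex.ofReal_re, Complex.mul_re, Complex.ofReal_im,
      Complex.I_re, Complex.I_im]
    ring
  have hcim : c.im = (b.re - a.re) / (2 * b.im) := by
    rw [hcdef]
    simp only [Complex.add_im, Complex.ofReal_im, Complex.mul_im, Complex.ofReal_re,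
      Complex.I_re, Complex.I_im]
    ring
  have hcre_pos : 0 < c.re := by rw [hcre]; positivity
  have hc0 : c ≠ 0 := by
    intro h
    rw [h] at hcre_pos
    simp at hcre_pos
  have hbconj : b - conj b = ((2 * b.im : ℝ) : ℂ) * Complex.I := Complex.sub_conj b
  have haconj : a - conj a = ((2 * a.im : ℝ) : ℂ) * Complex.I := Complex.sub_conj a
  have hcmul : c * (b - conj b) = a - conj b := by
    rw [hbconj]
    apply Complex.ext
    · simp only [Complex.mul_re, Complex.mul_im, Complex.sub_re, Complex.sub_im,
        Complex.ofReal_re, Complex.ofReal_im, Complex.I_re, Complex.I_im, Complex.conj_re,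
        Complex.conj_im, hcre, hcim]
      field_simp
      ring
    · simp only [Complex.mul_re, Complex.mul_im, Complex.sub_re, Complex.sub_im,
        Complex.ofReal_re, Complex.ofReal_im, Complex.I_re, Complex.I_im, Complex.conj_re,
        Complex.conj_im, hcre, hcim]
      field_simp
      ring
  set r : ℝ := ρ / (2 * b.im) with hrdef
  have hrpos : 0 < r := by rw [hrdef]; positivity
  have hM : (a.im + b.im) ^ 2 + (b.re - a.re) ^ 2 = m ^ 2 := by
    rw [hm2]; linear_combination hna + hnb
  have hsq : c.re ^ 2 + c.im ^ 2 = (m / (2 * b.im)) ^ 2 := by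
    rw [hcre, hcim, div_pow, div_pow, ← add_div, div_pow, hM]
  have hnormc : Complex.normSq c = (m / (2 * b.im)) ^ 2 := by
    rw [Complex.normSq_apply, ← hsq]
    ring
  have habsc : norm c = m / (2 * b.im) := by
    apply eq_of_sq_eq_sq' (norm_nonneg c) (by positivity)
    rw [Complex.sq_norm, hnormc]
  have hD : c.re ^ 2 + c.im ^ 2 = r ^ 2 + a.im / b.im := by
    rw [hsq, hrdef, div_pow, div_pow]
    have h2 : a.im / b.im = (4 * b.im * a.im) / (2 * b.im) ^ 2 := by
      rw [div_eq_div_iff hib.ne' (by positivity)]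
      ring
    rw [h2, ← add_div,
      show ρ ^ 2 + 4 * b.im * a.im = m ^ 2 by linear_combination hρ2 - hm2]
  -- the image of the real line lies on the circle |z - c| = r
  have hbb : b * conj b = 1 := by
    rw [Complex.mul_conj]
    norm_cast
    rw [← Complex.sq_norm, hb]
    norm_num
  have hbcne : b - conj b ≠ 0 := by
    rw [hbconj]
    exact mul_ne_zero (Complex.ofReal_ne_zero.mpr (by positivity : (0:ℝ) < 2 * b.im).ne')
      Complex.I_ne_zero
  have circ : ∀ x : ℝ, norm ((a - (x:ℂ)) / (b - (x:ℂ)) - c) = r := by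
    intro x
    have hbx : b - (x:ℂ) ≠ 0 := by
      intro h
      have him := congrArg Complex.im h
      simp only [Complex.sub_im, Complex.ofReal_im, Complex.zero_im, sub_zero] at him
      linarith
    have hkey : (a - (x:ℂ)) / (b - (x:ℂ)) - c
        = ((a - b) * ((x:ℂ) - conj b)) / ((b - (x:ℂ)) * (b - conj b)) := by
      have h0 : (a - (x:ℂ)) / (b - (x:ℂ)) - c = ((a - (x:ℂ)) - c * (b - (x:ℂ))) / (b - (x:ℂ)) := by
        field_simp
      rw [h0, div_eq_div_iff hbx (mul_ne_zero hbx hbcne)]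
      linear_combination (-(b - (x:ℂ)) ^ 2) * hcmul
    have hA : norm (b - (x:ℂ)) ≠ 0 := norm_ne_zero_iff.mpr hbx
    have h1 : norm ((x:ℂ) - conj b) = norm (b - (x:ℂ)) := by
      rw [show (x:ℂ) - conj b = conj ((x:ℂ) - b) by rw [map_sub, Complex.conj_ofReal]]
      rw [Complex.norm_conj, norm_sub_rev]
    have h2 : norm (b - conj b) = 2 * b.im := by
      rw [hbconj, norm_mul, Complex.norm_I, Complex.norm_real, Real.norm_eq_abs, mul_one, abs_of_pos (by positivity)]
    rw [hkey, norm_div, norm_mul, norm_mul, h1, h2, ← hρdef, hrdef]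
    field_simp
  -- upper bound
  have hrc : r < norm c := by
    rw [habsc, hrdef]
    gcongr
  have hroc : r / norm c = ρ / m := by
    rw [habsc, hrdef]
    field_simp
  set β := Real.arcsin (ρ / m) with hβdef
  have hub : ∀ x : ℝ, |((a - (x:ℂ)) / (b - (x:ℂ))).arg| ≤ |c.arg| + β := by
    intro x
    have h := abs_arg_le_of_dist_eq hrpos.le (circ x) hrc hcre_pos
    rwa [hroc] at h
  have hρm1 : ρ / m ≤ 1 := by
    rw [div_le_one hmpos]
    exact hρm.le
  have hρmpos : 0 < ρ / m := by positivity
  have hsinβ : Real.sin β = ρ / m := Real.sin_arcsin (by linarith) hρm1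
  have hcosβ : Real.cos β = 2 * σ / m := by
    rw [hβdef, Real.cos_arcsin]
    have hmne : m ≠ 0 := hmpos.ne'
    rw [show (1:ℝ) - (ρ / m) ^ 2 = (2 * σ / m) ^ 2 by
      rw [div_pow, div_pow, eq_div_iff (pow_ne_zero 2 hmne), sub_mul,
        div_mul_cancel₀ _ (pow_ne_zero 2 hmne), one_mul]
      linear_combination hm2 - hρ2 - 4 * hσ2]
    exact Real.sqrt_sq (by positivity)
  have hβpos : 0 < β := Real.arcsin_pos.mpr hρmpos
  have hβle : β ≤ Real.pi / 2 := Real.arcsin_le_pi_div_two _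
  have hCabs : |c.arg| < Real.pi / 2 := Complex.abs_arg_lt_pi_div_two_iff.mpr (Or.inl hcre_pos)
  -- the maximizing point
  set s : ℝ := if 0 ≤ c.arg then 1 else -1 with hsdef
  set θ₁ : ℝ := c.arg + s * β with hθ₁def
  have hθ₁abs : |θ₁| = |c.arg| + β := by
    rw [hθ₁def]
    by_cases h : 0 ≤ c.arg
    · rw [hsdef, if_pos h, one_mul,
        _root_.abs_of_nonneg (by linarith [hβpos] : (0:ℝ) ≤ c.arg + β), _root_.abs_of_nonneg h]
    · push_neg at h
      rw [hsdef, if_neg (not_le.mpr h),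
        _root_.abs_of_nonpos (by linarith [hβpos] : c.arg + -1 * β ≤ 0), _root_.abs_of_neg h]
      ring
  have hθ₁lt : |θ₁| < Real.pi := by
    rw [hθ₁abs]
    have hpi := Real.pi_pos
    linarith [hCabs, hβle]
  have hθ₁Ioc : θ₁ ∈ Set.Ioc (-Real.pi) Real.pi := by
    rcases abs_lt.mp hθ₁lt with ⟨h1, h2⟩
    exact ⟨h1, h2.le⟩
  set u : ℝ := σ / b.im with hudef
  have hupos : 0 < u := by rw [hudef]; positivity
  set z₀ : ℂ := ((u:ℝ):ℂ) * (Complex.cos ((θ₁:ℝ):ℂ) + Complex.sin ((θ₁:ℝ):ℂ) * Complex.I)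
    with hz₀def
  have hargz₀ : z₀.arg = θ₁ := by
    rw [hz₀def, Complex.arg_real_mul _ hupos, Complex.arg_cos_add_sin_mul_I hθ₁Ioc]
  have hz₀re : z₀.re = u * Real.cos θ₁ := by
    rw [hz₀def, Complex.re_ofReal_mul]
    simp [Complex.add_re, Complex.mul_re, Complex.I_re, Complex.I_im,
      Complex.cos_ofReal_re, Complex.sin_ofReal_im]
  have hz₀im : z₀.im = u * Real.sin θ₁ := by
    rw [hz₀def, Complex.im_ofReal_mul]
    simp [Complex.add_im, Complex.mul_im, Complex.I_re, Complex.I_im,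
      Complex.sin_ofReal_re, Complex.cos_ofReal_im]
  have hu2 : u ^ 2 = a.im / b.im := by
    rw [hudef, div_pow, hσ2, div_eq_div_iff (by positivity) hib.ne']
    ring
  have hz₀norm : z₀.re ^ 2 + z₀.im ^ 2 = a.im / b.im := by
    rw [hz₀re, hz₀im, ← hu2]
    linear_combination u ^ 2 * (Real.sin_sq_add_cos_sq θ₁)
  have hcabsne : norm c ≠ 0 := norm_ne_zero_iff.mpr hc0
  have hcreE : norm c * Real.cos c.arg = c.re := by
    rw [Complex.cos_arg hc0]
    field_simp
  have hcimE : norm c * Real.sin c.arg = c.im := by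
    rw [Complex.sin_arg]
    field_simp
  have hcossβ : Real.cos (s * β) = Real.cos β := by
    rw [hsdef]; split_ifs <;> simp
  have hsinsβ : Real.sin (s * β) = s * Real.sin β := by
    rw [hsdef]; split_ifs <;> simp
  have hdot : z₀.re * c.re + z₀.im * c.im = a.im / b.im := by
    have h1 : z₀.re * c.re + z₀.im * c.im
        = u * norm c * (Real.cos θ₁ * Real.cos c.arg + Real.sin θ₁ * Real.sin c.arg) := by
      rw [hz₀re, hz₀im, ← hcreE, ← hcimE]; ring
    rw [h1, ← Real.cos_sub, show θ₁ - c.arg = s * β by rw [hθ₁def]; ring, hcossβ, hcosβ,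
      habsc, hudef]
    rw [div_mul_div_comm, div_mul_div_comm, div_eq_div_iff (by positivity) hib.ne']
    linear_combination (2 * m * b.im) * hσ2
  have hz₀c : norm (z₀ - c) = r := by
    apply eq_of_sq_eq_sq' (norm_nonneg _) hrpos.le
    rw [Complex.sq_norm, Complex.normSq_apply]
    simp only [Complex.sub_re, Complex.sub_im]
    linear_combination hz₀norm - 2 * hdot + hD
  have hz₀ne1 : z₀ ≠ 1 := by
    intro h
    have h0 : θ₁ = 0 := by rw [← hargz₀, h, Complex.arg_one]
    have h5 : |c.arg| + β = 0 := by rw [← hθ₁abs, h0, abs_zero]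
    linarith [abs_nonneg c.arg, hβpos]
  have hz₀sub1 : z₀ - 1 ≠ 0 := sub_ne_zero.mpr hz₀ne1
  have hcmul' : conj c * (b - conj b) = b - conj a := by
    have h := congrArg conj hcmul
    simp only [map_mul, map_sub, Complex.conj_conj] at h
    linear_combination -h
  have hccj : c * conj c = ((c.re ^ 2 + c.im ^ 2 : ℝ) : ℂ) := by
    rw [Complex.mul_conj]
    norm_cast
    rw [Complex.normSq_apply]; ring
  have hDc : (c * conj c - ((r:ℝ):ℂ) ^ 2) * (b - conj b) = a - conj a := by
    rw [hccj, hbconj, haconj]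
    have h3 : ((c.re ^ 2 + c.im ^ 2 : ℝ) : ℂ) - ((r:ℝ):ℂ) ^ 2 = ((a.im / b.im : ℝ) : ℂ) := by
      norm_cast
      linarith [hD]
    rw [h3]
    have h4 : (a.im / b.im) * (2 * b.im) = 2 * a.im := by field_simp
    calc ((a.im / b.im : ℝ) : ℂ) * (((2 * b.im : ℝ) : ℂ) * Complex.I)
        = (((a.im / b.im) * (2 * b.im) : ℝ) : ℂ) * Complex.I := by push_cast; ring
      _ = ((2 * a.im : ℝ) : ℂ) * Complex.I := by rw [h4]
  have hK : (z₀ - c) * conj (z₀ - c) = ((r:ℝ):ℂ) ^ 2 := by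
    rw [Complex.mul_conj, ← Complex.sq_norm, hz₀c]
    push_cast
    ring
  set w : ℂ := (z₀ * b - a) / (z₀ - 1) with hwdef
  have hconjz₀sub1 : conj z₀ - 1 ≠ 0 := by
    intro h
    apply hz₀sub1
    have h2 := congrArg conj h
    simpa using h2
  have hwreal : conj w = w := by
    rw [hwdef]
    simp only [map_div₀, map_sub, map_mul, map_one]
    rw [div_eq_div_iff hconjz₀sub1 hz₀sub1]
    have hK' : (z₀ - c) * (conj z₀ - conj c) = ((r:ℝ):ℂ) ^ 2 := by
      rw [← map_sub]
      exact hK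
    linear_combination (conj b - b) * hK' - z₀ * hcmul' - (conj z₀) * hcmul + hDc
  have hwim : w.im = 0 := Complex.conj_eq_iff_im.mp hwreal
  set x₀ : ℝ := w.re with hx₀def
  have hx₀w : ((x₀:ℝ):ℂ) = w := by
    apply Complex.ext
    · simp [hx₀def]
    · simp [hwim]
  have hbx₀ : b - ((x₀:ℝ):ℂ) ≠ 0 := by
    intro h
    have him := congrArg Complex.im h
    simp only [Complex.sub_im, Complex.ofReal_im, Complex.zero_im, sub_zero] at him
    linarith
  have hfx₀ : (a - ((x₀:ℝ):ℂ)) / (b - ((x₀:ℝ):ℂ)) = z₀ := by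
    rw [div_eq_iff hbx₀, hx₀w, hwdef]
    field_simp
    ring
  have hattain : |((a - ((x₀:ℝ):ℂ)) / (b - ((x₀:ℝ):ℂ))).arg| = |c.arg| + β := by
    rw [hfx₀, hargz₀, hθ₁abs]
  have hbdd : BddAbove (Set.range fun x : ℝ => |((a - (x:ℂ)) / (b - (x:ℂ))).arg|) := by
    refine ⟨|c.arg| + β, ?_⟩
    rintro y ⟨x, rfl⟩
    exact hub x
  have hvA : vAngle a b = |c.arg| + β := by
    unfold vAngle
    apply le_antisymm (ciSup_le hub)
    rw [← hattain]
    exact le_ciSup hbdd x₀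
  rw [hvA]
  -- final computation of the sine
  have h1 : Real.sin |c.arg| = |c.im| / norm c := by
    rcases le_or_gt 0 c.im with h | h
    · rw [_root_.abs_of_nonneg (Complex.arg_nonneg_iff.mpr h), Complex.sin_arg,
        _root_.abs_of_nonneg h]
    · rw [_root_.abs_of_neg (Complex.arg_neg_iff.mpr h), Real.sin_neg, Complex.sin_arg,
        _root_.abs_of_neg h]
      ring
  have h2 : Real.cos |c.arg| = c.re / norm c := by
    rw [Real.cos_abs]
    exact Complex.cos_arg hc0
  rw [Real.sin_add, h1, h2, hsinβ, hcosβ, habsc, hcim, hcre]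
  rw [abs_div, abs_of_pos (by positivity : (0:ℝ) < 2 * b.im)]
  have habsab2 : norm (a + b) ^ 2 = 2 + 2 * (a.re * b.re) + 2 * (a.im * b.im) := by
    rw [Complex.sq_norm]
    simp [Complex.normSq_apply, Complex.add_re, Complex.add_im]
    linear_combination hna + hnb
  have hid1 : ρ * m = 2 * |b.re - a.re| := by
    apply eq_of_sq_eq_sq' (mul_nonneg (norm_nonneg _) (norm_nonneg _))
      (by positivity)
    rw [mul_pow, hρ2, hm2, mul_pow, _root_.sq_abs]
    linear_combination (4 * (b.re ^ 2 + b.im ^ 2 - 1) - 4 * b.im ^ 2) * hna - 4 * a.im ^ 2 * hnb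
  have hid2 : norm (a + b) * m = 2 * (a.im + b.im) := by
    apply eq_of_sq_eq_sq' (mul_nonneg (norm_nonneg _) (norm_nonneg _))
      (by linarith)
    rw [mul_pow, habsab2, hm2, mul_pow]
    linear_combination (4 * (b.re ^ 2 + b.im ^ 2 - 1) - 4 * b.re ^ 2) * hna - 4 * a.re ^ 2 * hnb
  have hb1 : |b.re - a.re| = ρ * m / 2 := by linarith [hid1]
  have hb2' : a.im + b.im = norm (a + b) * m / 2 := by linarith [hid2]
  rw [hb1, hb2']
  have hmne : m ≠ 0 := hmpos.ne'
  field_simp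
  ring
end

section
/- Let a, b ∈ H² with Re(a) ≠ Re(b), and let w = (|a|² − |b|²)/(2·Re(a−b)). Then the real numbers a⋆ and b⋆ satisfy |a⋆ − w| = |b⋆ − w| = |a − w| = |b − w|; that is, a⋆ and b⋆ lie on the circle centered at the real point w that passes through a and b. -/
open Complex ComplexConjugate

theorem endpoints_on_circle (a b : ℂ) (hia : 0 < a.im) (hib : 0 < b.im)
    (hre : a.re ≠ b.re)
    (w astar bstar : ℝ)
    (hw : w = (‖a‖ ^ 2 - ‖b‖ ^ 2) / (2 * (a - b).re))
    (hastar : astar = (‖a‖ ^ 2 - ‖b‖ ^ 2 +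
        ‖a - b‖ * ‖a - conj b‖) / (2 * (a - b).re))
    (hbstar : bstar = (‖a‖ ^ 2 - ‖b‖ ^ 2 -
        ‖a - b‖ * ‖a - conj b‖) / (2 * (a - b).re)) :
    ‖(astar : ℂ) - (w : ℂ)‖ = ‖(bstar : ℂ) - (w : ℂ)‖ ∧
    ‖(bstar : ℂ) - (w : ℂ)‖ = ‖a - (w : ℂ)‖ ∧
    ‖a - (w : ℂ)‖ = ‖b - (w : ℂ)‖ := by
  have hd : (a - b).re ≠ 0 := by
    simpa [Complex.sub_re, sub_ne_zero] using hre
  set d : ℝ := (a - b).re with hdd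
  set N : ℝ := ‖a‖ ^ 2 - ‖b‖ ^ 2 with hN
  set P : ℝ := ‖a - b‖ * ‖a - conj b‖ with hP
  have hPnn : 0 ≤ P := mul_nonneg (norm_nonneg _) (norm_nonneg _)
  have h1 : astar - w = P / (2 * d) := by
    rw [hastar, hw]; field_simp; ring
  have h2 : bstar - w = -(P / (2 * d)) := by
    rw [hbstar, hw]; field_simp; ring
  -- key polynomial identity
  have hNeq : N = (a.re ^ 2 + a.im ^ 2) - (b.re ^ 2 + b.im ^ 2) := by
    rw [hN, Complex.sq_norm, Complex.sq_norm, Complex.normSq_apply, Complex.normSq_apply]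
    ring
  have hkey : P ^ 2 = (2 * d * a.re - N) ^ 2 + (2 * d) ^ 2 * a.im ^ 2 := by
    have : P ^ 2 = Complex.normSq (a - b) * Complex.normSq (a - conj b) := by
      rw [hP, mul_pow, Complex.sq_norm, Complex.sq_norm]
    rw [this, hNeq, hdd]
    simp only [Complex.normSq_apply, Complex.sub_re, Complex.sub_im,
      Complex.conj_re, Complex.conj_im]
    ring
  have habsw : ‖a - (w : ℂ)‖ ^ 2 = (a.re - w) ^ 2 + a.im ^ 2 := by
    rw [Complex.sq_norm, Complex.normSq_apply]
    simp [Complex.sub_re, Complex.sub_im]; ring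
  have habsw' : ‖b - (w : ℂ)‖ ^ 2 = (b.re - w) ^ 2 + b.im ^ 2 := by
    rw [Complex.sq_norm, Complex.normSq_apply]
    simp [Complex.sub_re, Complex.sub_im]; ring
  have cast1 : ‖(astar : ℂ) - (w : ℂ)‖ = |astar - w| := by
    rw [← Complex.ofReal_sub, Complex.norm_real, Real.norm_eq_abs]
  have cast2 : ‖(bstar : ℂ) - (w : ℂ)‖ = |bstar - w| := by
    rw [← Complex.ofReal_sub, Complex.norm_real, Real.norm_eq_abs]
  refine ⟨?_, ?_, ?_⟩
  · rw [cast1, cast2, h1, h2, abs_neg]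
  · rw [cast2, h2, abs_neg]
    have hsq : |P / (2 * d)| ^ 2 = ‖a - (w : ℂ)‖ ^ 2 := by
      rw [habsw, _root_.sq_abs, hw]
      field_simp
      nlinarith [hkey, sq_nonneg d]
    rw [← Real.sqrt_sq (abs_nonneg _), ← Real.sqrt_sq (norm_nonneg (a - (w : ℂ))), hsq]
  · have hsq : ‖a - (w : ℂ)‖ ^ 2 = ‖b - (w : ℂ)‖ ^ 2 := by
      rw [habsw, habsw', hw, hNeq, hdd]
      have : a.re - b.re ≠ 0 := sub_ne_zero.mpr hre
      simp only [Complex.sub_re]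
      field_simp [Complex.sub_re]
      ring
    rw [← Real.sqrt_sq (norm_nonneg (a - (w : ℂ))), ← Real.sqrt_sq (norm_nonneg (b - (w : ℂ))), hsq]
end

section
/- Let a, b ∈ H² with Re(a) ≠ Re(b). Then (|a⋆ − b|·|a − b⋆|) / (|a⋆ − a|·|b − b⋆|) = (|a − conj(b)| + |a − b|) / (|a − conj(b)| − |a − b|). -/
open Complex ComplexConjugate

theorem cross_ratio_endpoints (a b : ℂ) (hia : 0 < a.im) (hib : 0 < b.im)
    (hre : a.re ≠ b.re)
    (astar bstar : ℝ)
    (hastar : astar = (‖a‖ ^ 2 - ‖b‖ ^ 2 +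
        ‖a - b‖ * ‖a - conj b‖) / (2 * (a - b).re))
    (hbstar : bstar = (‖a‖ ^ 2 - ‖b‖ ^ 2 -
        ‖a - b‖ * ‖a - conj b‖) / (2 * (a - b).re)) :
    (‖(astar : ℂ) - b‖ * ‖a - (bstar : ℂ)‖) /
      (‖(astar : ℂ) - a‖ * ‖b - (bstar : ℂ)‖) =
    (‖a - conj b‖ + ‖a - b‖) /
      (‖a - conj b‖ - ‖a - b‖) := by
  have hr : a.re - b.re ≠ 0 := sub_ne_zero.mpr hre
  have habre : (a - b).re = a.re - b.re := by simp
  set d := ‖a - b‖ with hd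
  set D := ‖a - conj b‖ with hD
  have hd2 : d ^ 2 = (a.re - b.re) ^ 2 + (a.im - b.im) ^ 2 := by
    rw [hd, Complex.sq_norm, Complex.normSq_apply]
    simp [Complex.sub_re, Complex.sub_im]; ring
  have hD2 : D ^ 2 = (a.re - b.re) ^ 2 + (a.im + b.im) ^ 2 := by
    rw [hD, Complex.sq_norm, Complex.normSq_apply]
    simp [Complex.sub_re, Complex.sub_im]; ring
  have hab : a ≠ b := fun h => hre (by rw [h])
  have hdpos : 0 < d := norm_pos_iff.mpr (sub_ne_zero.mpr hab)
  have hDpos : 0 < D := by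
    have : (a - conj b).im = a.im + b.im := by simp [Complex.sub_im]
    have hne : a - conj b ≠ 0 := by
      intro h
      rw [h] at this
      simp at this
      nlinarith
    exact norm_pos_iff.mpr hne
  have hdD : d < D := by nlinarith [mul_pos hia hib]
  have hsa : ‖a‖ ^ 2 = a.re ^ 2 + a.im ^ 2 := by
    rw [Complex.sq_norm, Complex.normSq_apply]; ring
  have hsb : ‖b‖ ^ 2 = b.re ^ 2 + b.im ^ 2 := by
    rw [Complex.sq_norm, Complex.normSq_apply]; ring
  have hA' : astar * (2 * (a.re - b.re)) =
      (a.re ^ 2 + a.im ^ 2 - b.re ^ 2 - b.im ^ 2) + d * D := by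
    rw [hastar, hsa, hsb, habre]; field_simp; ring
  have hB' : bstar * (2 * (a.re - b.re)) =
      (a.re ^ 2 + a.im ^ 2 - b.re ^ 2 - b.im ^ 2) - d * D := by
    rw [hbstar, hsa, hsb, habre]; field_simp; ring
  -- abbreviations
  set x := a.re
  set y := a.im
  set u := b.re
  set v := b.im
  set s : ℝ := x ^ 2 + y ^ 2 - u ^ 2 - v ^ 2 with hs
  set r : ℝ := x - u with hrr
  -- radius identities
  have hradA : (2 * r * x - s) ^ 2 + 4 * r ^ 2 * y ^ 2 = (d * D) ^ 2 := by
    linear_combination (-(D ^ 2)) * hd2 + (-(r ^ 2 + (y - v) ^ 2)) * hD2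
  have hradB : (2 * r * u - s) ^ 2 + 4 * r ^ 2 * v ^ 2 = (d * D) ^ 2 := by
    linear_combination (-(D ^ 2)) * hd2 + (-(r ^ 2 + (y - v) ^ 2)) * hD2
  -- squared-abs formulas
  have h1 : ‖(astar : ℂ) - b‖ ^ 2 = (astar - u) ^ 2 + v ^ 2 := by
    rw [Complex.sq_norm, Complex.normSq_apply]
    simp [Complex.sub_re, Complex.sub_im]; ring
  have h2 : ‖a - (bstar : ℂ)‖ ^ 2 = (x - bstar) ^ 2 + y ^ 2 := by
    rw [Complex.sq_norm, Complex.normSq_apply]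
    simp [Complex.sub_re, Complex.sub_im]; ring
  have h3 : ‖(astar : ℂ) - a‖ ^ 2 = (astar - x) ^ 2 + y ^ 2 := by
    rw [Complex.sq_norm, Complex.normSq_apply]
    simp [Complex.sub_re, Complex.sub_im]; ring
  have h4 : ‖b - (bstar : ℂ)‖ ^ 2 = (u - bstar) ^ 2 + v ^ 2 := by
    rw [Complex.sq_norm, Complex.normSq_apply]
    simp [Complex.sub_re, Complex.sub_im]; ring
  -- e-lemmas
  have e1 : ((astar - u) ^ 2 + v ^ 2) * (4 * r ^ 2) =
      2 * (d * D) * (d * D - (2 * r * u - s)) := by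
    linear_combination (2 * r * astar - 2 * r * u + (s + d * D - 2 * r * u)) * hA' + hradB
  have e2 : ((x - bstar) ^ 2 + y ^ 2) * (4 * r ^ 2) =
      2 * (d * D) * (d * D + (2 * r * x - s)) := by
    linear_combination (-(2 * r * x - 2 * r * bstar + (2 * r * x - s + d * D))) * hB' + hradA
  have e3 : ((astar - x) ^ 2 + y ^ 2) * (4 * r ^ 2) =
      2 * (d * D) * (d * D - (2 * r * x - s)) := by
    linear_combination (2 * r * astar - 2 * r * x + (s + d * D - 2 * r * x)) * hA' + hradA
  have e4 : ((u - bstar) ^ 2 + v ^ 2) * (4 * r ^ 2) =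
      2 * (d * D) * (d * D + (2 * r * u - s)) := by
    linear_combination (-(2 * r * u - 2 * r * bstar + (2 * r * u - s + d * D))) * hB' + hradB
  -- key algebraic identities
  have key1 : (d * D - (2 * r * u - s)) * (d * D + (2 * r * x - s)) =
      r ^ 2 * (D + d) ^ 2 := by
    linear_combination (D ^ 2 - r ^ 2) * hd2 + ((r ^ 2 + (y - v) ^ 2) - r ^ 2) * hD2
  have key2 : (d * D - (2 * r * x - s)) * (d * D + (2 * r * u - s)) =
      r ^ 2 * (D - d) ^ 2 := by
    linear_combination (D ^ 2 - r ^ 2) * hd2 + ((r ^ 2 + (y - v) ^ 2) - r ^ 2) * hD2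
  -- products
  have hr2 : (0:ℝ) < r ^ 2 := by positivity
  have habs2 : |r| ^ 2 = r ^ 2 := sq_abs r
  have habspos : (0:ℝ) < |r| := abs_pos.mpr hr
  have prod1 : (‖(astar : ℂ) - b‖ * ‖a - (bstar : ℂ)‖) ^ 2 =
      (d * D * (D + d) / (2 * |r|)) ^ 2 := by
    have e1' : (astar - u) ^ 2 + v ^ 2 =
        2 * (d * D) * (d * D - (2 * r * u - s)) / (4 * r ^ 2) :=
      (eq_div_iff (by positivity)).mpr e1
    have e2' : (x - bstar) ^ 2 + y ^ 2 =
        2 * (d * D) * (d * D + (2 * r * x - s)) / (4 * r ^ 2) :=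
      (eq_div_iff (by positivity)).mpr e2
    have h2r : ((2:ℝ) * |r|) ^ 2 = 4 * r ^ 2 := by
      rw [mul_pow, _root_.sq_abs]; norm_num
    rw [mul_pow, h1, h2, div_pow, h2r, e1', e2', div_mul_div_comm]
    rw [div_eq_div_iff (by positivity) (by positivity)]
    linear_combination (16 * r ^ 2 * (d * D) ^ 2) * key1
  have prod2 : (‖(astar : ℂ) - a‖ * ‖b - (bstar : ℂ)‖) ^ 2 =
      (d * D * (D - d) / (2 * |r|)) ^ 2 := by
    have e3' : (astar - x) ^ 2 + y ^ 2 =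
        2 * (d * D) * (d * D - (2 * r * x - s)) / (4 * r ^ 2) :=
      (eq_div_iff (by positivity)).mpr e3
    have e4' : (u - bstar) ^ 2 + v ^ 2 =
        2 * (d * D) * (d * D + (2 * r * u - s)) / (4 * r ^ 2) :=
      (eq_div_iff (by positivity)).mpr e4
    have h2r : ((2:ℝ) * |r|) ^ 2 = 4 * r ^ 2 := by
      rw [mul_pow, _root_.sq_abs]; norm_num
    rw [mul_pow, h3, h4, div_pow, h2r, e3', e4', div_mul_div_comm]
    rw [div_eq_div_iff (by positivity) (by positivity)]
    linear_combination (16 * r ^ 2 * (d * D) ^ 2) * key2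
  -- take square roots
  have s1 : ‖(astar : ℂ) - b‖ * ‖a - (bstar : ℂ)‖ =
      d * D * (D + d) / (2 * |r|) := by
    have hL : (0:ℝ) ≤ ‖(astar : ℂ) - b‖ * ‖a - (bstar : ℂ)‖ := by
      positivity
    have hR : (0:ℝ) ≤ d * D * (D + d) / (2 * |r|) := by positivity
    calc ‖(astar : ℂ) - b‖ * ‖a - (bstar : ℂ)‖
        = Real.sqrt ((‖(astar : ℂ) - b‖ * ‖a - (bstar : ℂ)‖) ^ 2) :=
          (Real.sqrt_sq hL).symm
      _ = Real.sqrt ((d * D * (D + d) / (2 * |r|)) ^ 2) := by rw [prod1]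
      _ = d * D * (D + d) / (2 * |r|) := Real.sqrt_sq hR
  have s2 : ‖(astar : ℂ) - a‖ * ‖b - (bstar : ℂ)‖ =
      d * D * (D - d) / (2 * |r|) := by
    have hL : (0:ℝ) ≤ ‖(astar : ℂ) - a‖ * ‖b - (bstar : ℂ)‖ := by
      positivity
    have hR : (0:ℝ) ≤ d * D * (D - d) / (2 * |r|) := by
      have : (0:ℝ) ≤ D - d := by linarith
      positivity
    calc ‖(astar : ℂ) - a‖ * ‖b - (bstar : ℂ)‖
        = Real.sqrt ((‖(astar : ℂ) - a‖ * ‖b - (bstar : ℂ)‖) ^ 2) :=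
          (Real.sqrt_sq hL).symm
      _ = Real.sqrt ((d * D * (D - d) / (2 * |r|)) ^ 2) := by rw [prod2]
      _ = d * D * (D - d) / (2 * |r|) := Real.sqrt_sq hR
  rw [s1, s2]
  have hc : (0:ℝ) < d * D / (2 * |r|) := by positivity
  have hDd' : D - d ≠ 0 := by linarith
  field_simp
end

section
/- Let τ ∈ (−1, 1) and define h(z) = (z − τ)/(1 − τ·z). Let a, b ∈ ℂ with |a| = |b| = 1, Im(a) > 0, Im(b) > 0 and a ≠ b. Then v(a,b)/2 < v(h(a), h(b)) < 2·v(a,b). -/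
open Complex ComplexConjugate

/-- From `X² = Y²` and `X·Y ≥ 0` conclude `X = Y`. -/
lemma eq_of_sq_eq_of_mul_nonneg {X Y : ℝ} (h : X^2 = Y^2) (h2 : 0 ≤ X*Y) : X = Y := by
  have hf : (X - Y) * (X + Y) = 0 := by ring_nf; linarith
  rcases mul_eq_zero.mp hf with h3 | h3
  · linarith
  · have hXY : X = -Y := by linarith
    have : Y^2 ≤ 0 := by nlinarith
    have : Y = 0 := by nlinarith
    simp [hXY, this]

/-- Cone criterion: if `cos θ * |im z| ≤ sin θ * re z` with `0 < θ ≤ π` then `|arg z| ≤ θ`. -/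
lemma abs_arg_le_of_cone {z : ℂ} (hz : z ≠ 0) {θ : ℝ} (hθ0 : 0 < θ) (hθπ : θ ≤ Real.pi)
    (H : Real.cos θ * |z.im| ≤ Real.sin θ * z.re) : |z.arg| ≤ θ := by
  by_contra hc
  push_neg at hc
  set φ := |z.arg| with hφ
  have hφπ : φ ≤ Real.pi := Complex.abs_arg_le_pi z
  have habs : (0:ℝ) < ‖z‖ := by
    simpa using norm_pos_iff.mpr hz
  have hcosφ : Real.cos φ = z.re / ‖z‖ := by
    rw [hφ, Real.cos_abs]
    exact Complex.cos_arg hz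
  have hsinφ : Real.sin φ = |z.im| / ‖z‖ := by
    rcases abs_cases z.arg with ⟨h1, h2⟩ | ⟨h1, h2⟩
    · rw [hφ, h1, Complex.sin_arg]
      have : 0 ≤ z.arg := h2
      have him : 0 ≤ z.im / ‖z‖ := by
        rw [← Complex.sin_arg]; exact Real.sin_nonneg_of_nonneg_of_le_pi this (Complex.arg_le_pi z)
      have him' : 0 ≤ z.im := by
        by_contra hneg; push_neg at hneg
        have : z.im / ‖z‖ < 0 := div_neg_of_neg_of_pos hneg habs
        linarith
      rw [_root_.abs_of_nonneg him']
    · rw [hφ, h1, Real.sin_neg, Complex.sin_arg]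
      have hneg : z.arg ≤ 0 := by linarith
      have him : z.im / ‖z‖ ≤ 0 := by
        rw [← Complex.sin_arg]
        apply Real.sin_nonpos_of_nonpos_of_neg_pi_le hneg
        linarith [Complex.neg_pi_lt_arg z]
      have him' : z.im ≤ 0 := by
        by_contra hpos; push_neg at hpos
        have : 0 < z.im / ‖z‖ := div_pos hpos habs
        linarith
      rw [_root_.abs_of_nonpos him']; ring
  -- sin (φ - θ) > 0 since 0 < φ - θ < π ; but sin(φ-θ) ≤ 0 from H
  have hsin : Real.sin (φ - θ) = Real.sin φ * Real.cos θ - Real.cos φ * Real.sin θ :=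
    Real.sin_sub φ θ
  have hle : Real.sin φ * Real.cos θ - Real.cos φ * Real.sin θ ≤ 0 := by
    rw [hcosφ, hsinφ]
    rw [div_mul_eq_mul_div, div_mul_eq_mul_div, ← sub_div]
    apply div_nonpos_of_nonpos_of_nonneg _ habs.le
    nlinarith [H]
  have hpos : 0 < Real.sin (φ - θ) := by
    apply Real.sin_pos_of_pos_of_lt_pi
    · linarith
    · linarith
  linarith [hsin ▸ hpos]

/-- Reverse criterion: if `sin θ * re z ≤ cos θ * |im z|` with `0 ≤ θ < π` then `θ ≤ |arg z|`. -/
lemma le_abs_arg_of_cone {z : ℂ} (hz : z ≠ 0) {θ : ℝ} (hθ0 : 0 ≤ θ) (hθπ : θ < Real.pi)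
    (H : Real.sin θ * z.re ≤ Real.cos θ * |z.im|) : θ ≤ |z.arg| := by
  by_contra hc
  push_neg at hc
  set φ := |z.arg| with hφ
  have hφ0 : 0 ≤ φ := abs_nonneg _
  have habs : (0:ℝ) < ‖z‖ := by simpa using norm_pos_iff.mpr hz
  have hcosφ : Real.cos φ = z.re / ‖z‖ := by
    rw [hφ, Real.cos_abs]; exact Complex.cos_arg hz
  have hsinφ : Real.sin φ = |z.im| / ‖z‖ := by
    rcases abs_cases z.arg with ⟨h1, h2⟩ | ⟨h1, h2⟩
    · rw [hφ, h1, Complex.sin_arg]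
      have him : 0 ≤ z.im / ‖z‖ := by
        rw [← Complex.sin_arg]; exact Real.sin_nonneg_of_nonneg_of_le_pi h2 (Complex.arg_le_pi z)
      have him' : 0 ≤ z.im := by
        by_contra hneg; push_neg at hneg
        have : z.im / ‖z‖ < 0 := div_neg_of_neg_of_pos hneg habs
        linarith
      rw [_root_.abs_of_nonneg him']
    · rw [hφ, h1, Real.sin_neg, Complex.sin_arg]
      have hneg : z.arg ≤ 0 := by linarith
      have him : z.im / ‖z‖ ≤ 0 := by
        rw [← Complex.sin_arg]
        apply Real.sin_nonpos_of_nonpos_of_neg_pi_le hneg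
        linarith [Complex.neg_pi_lt_arg z]
      have him' : z.im ≤ 0 := by
        by_contra hpos; push_neg at hpos
        have : 0 < z.im / ‖z‖ := div_pos hpos habs
        linarith
      rw [_root_.abs_of_nonpos him']; ring
  have hsin : Real.sin (θ - φ) = Real.sin θ * Real.cos φ - Real.cos θ * Real.sin φ :=
    Real.sin_sub θ φ
  have hle : Real.sin θ * Real.cos φ - Real.cos θ * Real.sin φ ≤ 0 := by
    rw [hcosφ, hsinφ]
    rw [← mul_div_assoc, ← mul_div_assoc, ← sub_div]
    apply div_nonpos_of_nonpos_of_nonneg _ habs.le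
    linarith [H]
  have hpos : 0 < Real.sin (θ - φ) := by
    apply Real.sin_pos_of_pos_of_lt_pi
    · linarith
    · linarith
  linarith [hsin ▸ hpos]

section Algebra

variable {p q u v s d g : ℝ}

/-- Main tangent-circle identity. -/
lemma idJ1 (hp : p^2 + u^2 = 1) (hq : q^2 + v^2 = 1) (hs2 : s^2 = u*v)
    (hd2 : d^2 = (1 - p*q - u*v)/2) (hg2 : g^2 = (1 + p*q + u*v)/2)
    (hdg : d*g = (u*q - v*p)/2) (hx1 : g*u = g*v + d*(p+q))
    (hx2 : g*p = g*q - d*(u+v)) (x : ℝ) :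
    4*g^2*(g+s)*((d*(g+s))*((p-x)*(q-x)+u*v) - (g*s-d^2)*(u*(q-x)-v*(p-x)))
      = d*(2*g*(g+s)*x-(p+q))^2 := by
    linear_combination ((-4:ℝ)*s*u*v^3 + (8:ℝ)*s*q*x + (4:ℝ)*s*q*u*v*x + (-4:ℝ)*s*q^2 + (-4:ℝ)*s*q^2*v^2 + (4:ℝ)*s*p*x + (4:ℝ)*g*q*x + (4:ℝ)*g*p*x + (4:ℝ)*g*s^2*u*v + (-4:ℝ)*g*s^2*q*x + (-4:ℝ)*g*s^2*p*x + (4:ℝ)*g*s^2*p*q + (8:ℝ)*g^2*s*u*v + (-8:ℝ)*g^2*s*q*x + (-8:ℝ)*g^2*s*p*x + (8:ℝ)*g^2*s*p*q + (4:ℝ)*g^3*u*v + (-4:ℝ)*g^3*q*x + (-4:ℝ)*g^3*p*x + (4:ℝ)*g^3*p*q + (4:ℝ)*d*g*s*v*x + (-4:ℝ)*d*g*s*u*x + (4:ℝ)*d*g*s*q*u + (-4:ℝ)*d*g*s*p*v + (4:ℝ)*d*g^2*v*x + (-4:ℝ)*d*g^2*u*x + (4:ℝ)*d*g^2*q*u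 + (-4:ℝ)*d*g^2*p*v) * hdg +
      ((-2:ℝ)*s*v*x + (-2:ℝ)*s*u*x + (-2:ℝ)*s*u*v^2*x + (-2:ℝ)*s*u^2*v*x + (2:ℝ)*s*q*v + (4:ℝ)*s*q*v^3 + (4:ℝ)*s*q*u + (-2:ℝ)*s*q^2*u*x + (2:ℝ)*s*p*u + (-4:ℝ)*s*p*u*v^2 + (2:ℝ)*s*p*q*v*x + (-2:ℝ)*s*p*q*u*x + (-4:ℝ)*s*p*q^2*v + (2:ℝ)*s*p^2*v*x + (-4:ℝ)*s*p^2*q*v) * hd2 +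
      ((2:ℝ)*s*q*u^2*v + (-4:ℝ)*s*q^2*u*x + (-2:ℝ)*s*p*u*v^2 + (2:ℝ)*s*p*q*v*x + (-2:ℝ)*s*p*q*u*x + (2:ℝ)*s*p*q^2*u + (4:ℝ)*s*p^2*v*x + (-2:ℝ)*s*p^2*q*v + (2:ℝ)*g*q*u^2*v + (-2:ℝ)*g*q^2*u*x + (-2:ℝ)*g*p*u*v^2 + (2:ℝ)*g*p*q*v*x + (-2:ℝ)*g*p*q*u*x + (2:ℝ)*g*p*q^2*u + (2:ℝ)*g*p^2*v*x + (-2:ℝ)*g*p^2*q*v + (-4:ℝ)*g*s^2*v*x + (4:ℝ)*g*s^2*u*x + (-4:ℝ)*g*s^2*q*u + (4:ℝ)*g*s^2*p*v + (-4:ℝ)*g^2*s*v*x + (4:ℝ)*g^2*s*u*x + (-4:ℝ)*g^2*s*q*u + (4:ℝ)*g^2*s*p*v + (2:ℝ)*d*q*u*v*x + (-2:ℝ)*d*q*u^2*x + (2:ℝ)*d*q^2*u^2 + (-2:ℝ)*d*p*v^2*x + (2:ℝ)*d*p*u*v*x + (-4:ℝ)*d*p*q*u*v + (2:ℝ)*d*p^2*v^2)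 * hg2 +
      ((-2:ℝ)*g*v*x + (2:ℝ)*g*u*x + (-2:ℝ)*g*u*v^2*x + (2:ℝ)*g*u^2*v*x + (-2:ℝ)*g*q*u + (-2:ℝ)*g*q^2*u*x + (2:ℝ)*g*p*v + (2:ℝ)*g*p^2*v*x) * hs2 +
      ((1:ℝ)*s*v*x + (1:ℝ)*s*u*v^2*x + (-3:ℝ)*s*q*v + (-1:ℝ)*s*q*u + (2:ℝ)*s*q*u*v^2 + (2:ℝ)*s*q^3*v + (1:ℝ)*s*q^3*u + (1:ℝ)*s*p*q*v*x + (1:ℝ)*s*p*q^2*v + (-1:ℝ)*g*v*x + (3:ℝ)*g*u*v^2*x + (-1:ℝ)*g*q*v + (-2:ℝ)*g*q*u*v^2 + (1:ℝ)*g*q^2*v*x + (-1:ℝ)*g*q^2*u*x + (1:ℝ)*g*q^3*u + (1:ℝ)*g*p*q*v*x + (-1:ℝ)*g*p*q^2*v + (1:ℝ)*d*v^2 + (3:ℝ)*d*u*v + (-3:ℝ)*d*u*v^3 + (-1:ℝ)*d*q*v^2*x + (-1:ℝ)*d*q*u*v*x + (-2:ℝ)*d*q^2*u*v + (1:ℝ)*d*p*q*v^2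 + (2:ℝ)*d*g*s*v^2) * hp +
      ((1:ℝ)*s*u*x + (1:ℝ)*s*u^2*v*x + (2:ℝ)*s*q*v + (-1:ℝ)*s*q*u + (-2:ℝ)*s*q*u*v^2 + (-2:ℝ)*s*q*u^2*v + (-1:ℝ)*s*q*u^3 + (-1:ℝ)*s*p*u + (2:ℝ)*s*p*u*v^2 + (1:ℝ)*s*p*u^2*v + (-1:ℝ)*s*p*q*u*x + (1:ℝ)*g*v*x + (-4:ℝ)*g*u^2*v*x + (1:ℝ)*g*u^3*x + (1:ℝ)*g*q*u + (-1:ℝ)*g*q*u^3 + (-1:ℝ)*g*p*v + (1:ℝ)*g*p*u + (3:ℝ)*g*p*u^2*v + (-1:ℝ)*g*p*q*u*x + (-1:ℝ)*d*v^2 + (-3:ℝ)*d*u*v + (4:ℝ)*d*u*v^3 + (4:ℝ)*d*u^2*v^2 + (3:ℝ)*d*u^3*v + (-1:ℝ)*d*p*u*v*x + (-1:ℝ)*d*p*u^2*x + (1:ℝ)*d*p*q*u^2 + (2:ℝ)*d*g*s*u^2) * hq +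
      ((1:ℝ)*v^2*x + (1:ℝ)*u^2*x + (-2:ℝ)*u^2*v^2*x + (1:ℝ)*q + (-1:ℝ)*q*v^2 + (-1:ℝ)*q*u*v + (4:ℝ)*q*u*v^3 + (-1:ℝ)*q*u^2 + (4:ℝ)*q*u^2*v^2 + (1:ℝ)*p + (3:ℝ)*p*u*v + (-4:ℝ)*p*u*v^3 + (-2:ℝ)*p*q*u*v*x + (2:ℝ)*g*s*x + (2:ℝ)*g*s*u*v*x + (-2:ℝ)*g*s*q + (2:ℝ)*d*s*u + (-4:ℝ)*d*s*u*v^2 + (-2:ℝ)*d*s*q*u*x + (2:ℝ)*d*s*p*v*x + (-4:ℝ)*d*s*p*q*v) * hx1 +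
      ((1:ℝ)*v^3 + (3:ℝ)*u*v^2 + (-4:ℝ)*u*v^4 + (2:ℝ)*g*s*v + (2:ℝ)*d*s*x + (2:ℝ)*d*s*u*v*x + (-2:ℝ)*d*s*q + (-4:ℝ)*d*s*q*v^2) * hx2

/-- The linear factor `Q` along the identity. -/
lemma idDQ (hp : p^2 + u^2 = 1) (hq : q^2 + v^2 = 1) (hs2 : s^2 = u*v)
    (hd2 : d^2 = (1 - p*q - u*v)/2) (hg2 : g^2 = (1 + p*q + u*v)/2)
    (hdg : d*g = (u*q - v*p)/2) (x : ℝ) :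
    2*g*(g+s)*(u*(q-x)-v*(p-x)) = 4*d*s*g*(g+s) - (u-v)*(2*g*(g+s)*x-(p+q)) := by
    linear_combination ((-4:ℝ)*s^2 + (-4:ℝ)*g*s) * hdg +
      ((2:ℝ)*q*u + (-2:ℝ)*p*v) * hg2 +
      ((-2:ℝ)*q*u + (2:ℝ)*p*v) * hs2 +
      ((-1:ℝ)*q*v) * hp +
      ((1:ℝ)*p*u) * hq

lemma idE5 (hp : p^2 + u^2 = 1) (hq : q^2 + v^2 = 1) (hs2 : s^2 = u*v)
    (hd2 : d^2 = (1 - p*q - u*v)/2) (hg2 : g^2 = (1 + p*q + u*v)/2)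
    (hdg : d*g = (u*q - v*p)/2) (hx1 : g*u = g*v + d*(p+q))
    (hx2 : g*p = g*q - d*(u+v)) :
    4*d^2*s*(g+s) - (u-v)^2*(g*s-d^2) = 4*g*d^2*(g+s)*(d^2+s^2) := by
    linear_combination ((4:ℝ)*d*s + (-4:ℝ)*d*s^3 + (-4:ℝ)*d*g*s^2 + (-4:ℝ)*d^3*s + (-4:ℝ)*d^3*g) * hdg +
      ((-1:ℝ)*v^2 + (-4:ℝ)*u*v + (1:ℝ)*u^2 + (-1:ℝ)*q^2 + (1:ℝ)*p^2 + (4:ℝ)*s^2 + (-2:ℝ)*d*s*q*u + (2:ℝ)*d*s*p*v + (-2:ℝ)*d*g*q*u + (2:ℝ)*d*g*p*v) * hd2 +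
      ((2:ℝ) + (-2:ℝ)*u*v + (-2:ℝ)*p*q + (-2:ℝ)*d*s*q*u + (2:ℝ)*d*s*p*v + (-2:ℝ)*d*g*q*u + (2:ℝ)*d*g*p*v) * hs2 +
      ((1/2:ℝ) + (-1/2:ℝ)*u*v + (-1/2:ℝ)*p*q + (-1:ℝ)*d*s*q*v + (-1:ℝ)*d*g*q*v) * hp +
      ((-1/2:ℝ) + (1/2:ℝ)*u*v + (1/2:ℝ)*p*q + (1:ℝ)*d*s*p*u + (1:ℝ)*d*g*p*u) * hq +
      ((1:ℝ)*s*v + (-1:ℝ)*s*u + (-1:ℝ)*d*q + (1:ℝ)*d*p) * hx1 +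
      ((2:ℝ)*d*v) * hx2

/-- Pointwise cone inequality: `(gs - d²)·|Q| ≤ d(g+s)·P`. -/
lemma core_bound (hp : p^2 + u^2 = 1) (hq : q^2 + v^2 = 1) (hs2 : s^2 = u*v)
    (hd2 : d^2 = (1 - p*q - u*v)/2) (hg2 : g^2 = (1 + p*q + u*v)/2)
    (hdg : d*g = (u*q - v*p)/2) (hx1 : g*u = g*v + d*(p+q))
    (hx2 : g*p = g*q - d*(u+v))
    (hd : 0 < d) (hg : 0 < g) (hs : 0 < s) (x : ℝ) :
    (g*s-d^2) * |u*(q-x)-v*(p-x)| ≤ (d*(g+s)) * ((p-x)*(q-x)+u*v) := by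
  have hgs : 0 < g + s := by linarith
  have hJ := idJ1 hp hq hs2 hd2 hg2 hdg hx1 hx2 x
  set P := (p-x)*(q-x)+u*v with hP
  set Q := u*(q-x)-v*(p-x) with hQ
  set Y := 2*g*(g+s)*x-(p+q) with hY
  have hpos4 : 0 < 4*g^2*(g+s) := by positivity
  have hmain : 0 ≤ (d*(g+s))*P - (g*s-d^2)*Q := by
    have h0 : 0 ≤ 4*g^2*(g+s) * ((d*(g+s))*P - (g*s-d^2)*Q) := by
      rw [show 4*g^2*(g+s) * ((d*(g+s))*P - (g*s-d^2)*Q)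
            = 4*g^2*(g+s)*((d*(g+s))*P - (g*s-d^2)*Q) from by ring, hJ]
      positivity
    exact (mul_nonneg_iff_of_pos_left hpos4).mp h0
  rcases le_or_gt 0 Q with hQ0 | hQ0
  · rw [_root_.abs_of_nonneg hQ0]
    linarith
  · rw [_root_.abs_of_neg hQ0]
    rcases le_or_gt (g*s-d^2) 0 with hC | hC
    · nlinarith [mul_nonneg (neg_nonneg.mpr hC) (neg_nonneg.mpr hQ0.le)]
    · -- use the second identity
      have hDQ := idDQ hp hq hs2 hd2 hg2 hdg x
      have hE5 := idE5 hp hq hs2 hd2 hg2 hdg hx1 hx2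
      have hKey : 16*d*g^2*(g+s)*((d*(g+s))*P + (g*s-d^2)*Q)
          = (2*d*Y - 4*g*(u-v)*(g*s-d^2))^2
            + 64*g^3*d^2*(g+s)*(d^2+s^2)*(g*s-d^2) := by
        linear_combination (4*d)*hJ + (16*d*g*(g*s-d^2))*hDQ + (16*g^2*(g*s-d^2))*hE5
      have h1 : 0 ≤ (2*d*Y - 4*g*(u-v)*(g*s-d^2))^2 := sq_nonneg _
      have h2 : 0 ≤ 64*g^3*d^2*(g+s)*(d^2+s^2)*(g*s-d^2) := by positivity
      have hpos16 : 0 < 16*d*g^2*(g+s) := by positivity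
      have hT2 : 0 ≤ 16*d*g^2*(g+s) * ((d*(g+s))*P + (g*s-d^2)*Q) := by
        rw [show 16*d*g^2*(g+s) * ((d*(g+s))*P + (g*s-d^2)*Q)
              = 16*d*g^2*(g+s)*((d*(g+s))*P + (g*s-d^2)*Q) from by ring, hKey]
        exact add_nonneg h1 h2
      have := (mul_nonneg_iff_of_pos_left hpos16).mp hT2
      linarith

end Algebra

section Formula

/-- `1 + pq - uv ≥ 0` for two points on the unit circle. -/
lemma one_add_nonneg {p q u v : ℝ} (hp : p^2 + u^2 = 1) (hq : q^2 + v^2 = 1)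
    (hdpos : 0 < 1 - p*q - u*v) : 0 ≤ 1 + p*q - u*v := by
  have key : (1 - u*v - p*q)*(1 - u*v + p*q) = (u-v)^2 := by
    linear_combination (-(1:ℝ)*q^2)*hp + (-(1:ℝ) + u^2)*hq
  nlinarith [sq_nonneg (u-v)]

/-- orientation forces `p ≤ q`. -/
lemma p_le_q {p q u v : ℝ} (hp : p^2 + u^2 = 1) (hq : q^2 + v^2 = 1)
    (hu : 0 < u) (hv : 0 < v) (hor : v*p < u*q) : p ≤ q := by
  by_contra hc
  push_neg at hc
  rcases le_or_gt 0 q with h0 | h0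
  · have hpq : q^2 < p^2 := by nlinarith
    have huv : u^2 < v^2 := by nlinarith
    have huv' : u < v := by nlinarith
    nlinarith [mul_pos hv (sub_pos.mpr hc)]
  · have hq0 : u*q < 0 := mul_neg_of_pos_of_neg hu h0
    have hp0 : p < 0 := by nlinarith
    have hpq : p^2 < q^2 := by nlinarith
    have huv' : v < u := by nlinarith
    nlinarith [mul_pos hv (sub_pos.mpr hc), mul_pos (sub_pos.mpr huv') (neg_pos.mpr h0)]

set_option maxHeartbeats 2000000 in
lemma vAngle_formula_oriented (a b : ℂ) (ha : ‖a‖ = 1) (hb : ‖b‖ = 1)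
    (hia : 0 < a.im) (hib : 0 < b.im) (hor : b.im * a.re < a.im * b.re) :
    vAngle a b = Real.arcsin (‖a-b‖/2)
      + Real.arctan (‖a-b‖ / (2 * Real.sqrt (a.im*b.im))) := by
  have hab : a ≠ b := by
    rintro rfl; exact lt_irrefl _ hor
  -- basic real data
  have hnsa : a.re*a.re + a.im*a.im = 1 := by
    have h1 : Complex.normSq a = 1 := by rw [← Complex.sq_norm, ha]; norm_num
    rw [Complex.normSq_apply] at h1; exact h1
  have hnsb : b.re*b.re + b.im*b.im = 1 := by
    have h1 : Complex.normSq b = 1 := by rw [← Complex.sq_norm, hb]; norm_num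
    rw [Complex.normSq_apply] at h1; exact h1
  have hp : a.re^2 + a.im^2 = 1 := by linear_combination hnsa
  have hq : b.re^2 + b.im^2 = 1 := by linear_combination hnsb
  set d := ‖a-b‖/2 with hddef
  set g := ‖a+b‖/2 with hgdef
  set s := Real.sqrt (a.im*b.im) with hsdef
  have hd : 0 < d := by
    have : a - b ≠ 0 := sub_ne_zero.mpr hab
    have := norm_pos_iff.mpr this
    positivity
  have hg : 0 < g := by
    have h1 : a + b ≠ 0 := by
      intro h0
      have := congrArg Complex.im h0
      simp [Complex.add_im] at this
      linarith
    have := norm_pos_iff.mpr h1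
    positivity
  have hs : 0 < s := Real.sqrt_pos.mpr (mul_pos hia hib)
  have hs2 : s^2 = a.im*b.im := Real.sq_sqrt (mul_pos hia hib).le
  have hd2 : d^2 = (1 - a.re*b.re - a.im*b.im)/2 := by
    have h2 : (‖a-b‖)^2 = (a.re-b.re)^2 + (a.im-b.im)^2 := by
      rw [Complex.sq_norm, Complex.normSq_apply]
      simp [Complex.sub_re, Complex.sub_im]
      ring
    rw [hddef, div_pow, h2]
    linear_combination (1/4)*hp + (1/4)*hq
  have hg2 : g^2 = (1 + a.re*b.re + a.im*b.im)/2 := by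
    have h2 : (‖a+b‖)^2 = (a.re+b.re)^2 + (a.im+b.im)^2 := by
      rw [Complex.sq_norm, Complex.normSq_apply]
      simp [Complex.add_re, Complex.add_im]
      ring
    rw [hgdef, div_pow, h2]
    linear_combination (1/4)*hp + (1/4)*hq
  have horient : 0 < a.im*b.re - b.im*a.re := by linarith
  have honeadd : 0 ≤ 1 + a.re*b.re - a.im*b.im := by
    apply one_add_nonneg hp hq
    nlinarith [hd2, sq_nonneg d]
  have hdg : d*g = (a.im*b.re - b.im*a.re)/2 := by
    apply eq_of_sq_eq_of_mul_nonneg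
    · linear_combination (g^2)*hd2 + ((1 - a.im*b.im - a.re*b.re)/2)*hg2
        + ((-(1:ℝ)*b.im^2 - b.re^2)/4)*hp + (-(1:ℝ)/4)*hq
    · positivity
  have hpleq : a.re ≤ b.re := p_le_q hp hq hia hib (by linarith)
  have hx1 : g*a.im = g*b.im + d*(a.re+b.re) := by
    have hE4 : (a.im-b.im)*(a.re+b.re) = (1 + a.re*b.re - a.im*b.im)*(a.im*b.re - b.im*a.re) := by
      linear_combination ((1:ℝ)*b.re*b.im)*hp + (-(1:ℝ)*a.re*a.im)*hq
    have h1 : (g*(a.im-b.im))^2 = (d*(a.re+b.re))^2 := by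
      linear_combination ((-(1:ℝ))*(b.re^2 + 2*a.re*b.re + a.re^2))*hd2
        + ((b.im^2 - 2*a.im*b.im + a.im^2))*hg2
        + ((-(1:ℝ)/2) + (1/2)*a.im*b.im + b.re^2 + (1/2)*a.re*b.re)*hp
        + ((1/2) + (1/2)*a.im*b.im - a.im^2 + (1/2)*a.re*b.re)*hq
    have h2 : g*(a.im-b.im) = d*(a.re+b.re) := by
      apply eq_of_sq_eq_of_mul_nonneg h1
      rw [show g*(a.im-b.im) * (d*(a.re+b.re)) = (d*g)*((a.im-b.im)*(a.re+b.re)) from by ring,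
        hdg, hE4]
      have : 0 ≤ (1 + a.re*b.re - a.im*b.im)*(a.im*b.re - b.im*a.re) :=
        mul_nonneg honeadd horient.le
      nlinarith [this]
    linarith [h2]
  have hx2 : g*a.re = g*b.re - d*(a.im+b.im) := by
    have h1 : (g*(a.re-b.re))^2 = (-(d*(a.im+b.im)))^2 := by
      linear_combination ((-(1:ℝ))*(b.im^2 + 2*a.im*b.im + a.im^2))*hd2
        + ((b.re^2 - 2*a.re*b.re + a.re^2))*hg2
        + ((1/2) + (1/2)*a.im*b.im - b.re^2 + (1/2)*a.re*b.re)*hp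
        + ((-(1:ℝ)/2) + (1/2)*a.im*b.im + a.im^2 + (1/2)*a.re*b.re)*hq
    have h2 : g*(a.re-b.re) = -(d*(a.im+b.im)) := by
      apply eq_of_sq_eq_of_mul_nonneg h1
      have : 0 ≤ (d*g) * ((b.re - a.re)*(a.im+b.im)) := by
        apply mul_nonneg (by positivity)
        apply mul_nonneg (by linarith) (by linarith)
      nlinarith [this]
    linarith [h2]
  -- trigonometric values of θ
  set m := Real.sqrt (d^2 + s^2) with hmdef
  have hm : 0 < m := Real.sqrt_pos.mpr (by positivity)
  have hm2 : m^2 = d^2 + s^2 := Real.sq_sqrt (by positivity)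
  have hg2' : g^2 = 1 - d^2 := by rw [hd2, hg2]; ring
  have hd1 : d < 1 := by nlinarith
  have hsg : Real.sqrt (1 - d^2) = g := by
    rw [show (1:ℝ) - d^2 = g^2 from by linarith]
    exact Real.sqrt_sq hg.le
  have hsq15 : Real.sqrt (1 + (d/s)^2) = m/s := by
    apply eq_of_sq_eq_of_mul_nonneg
    · rw [Real.sq_sqrt (by positivity), show (m/s)^2 = m^2/s^2 from div_pow m s 2, hm2]
      field_simp
      ring
    · exact mul_nonneg (Real.sqrt_nonneg _) (by positivity)
  set θ := Real.arcsin d + Real.arctan (d/s) with hθdef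
  have hsinθ : Real.sin θ = (d*(g+s))/m := by
    rw [hθdef, Real.sin_add, Real.sin_arcsin (by linarith) (by linarith),
      Real.cos_arcsin, hsg, Real.cos_arctan, Real.sin_arctan, hsq15]
    field_simp
    ring
  have hcosθ : Real.cos θ = (g*s - d^2)/m := by
    rw [hθdef, Real.cos_add, Real.sin_arcsin (by linarith) (by linarith),
      Real.cos_arcsin, hsg, Real.cos_arctan, Real.sin_arctan, hsq15]
    field_simp
  have harcsinpos : 0 < Real.arcsin d := Real.arcsin_pos.mpr hd
  have harctanpos : 0 < Real.arctan (d/s) := by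
    rw [← Real.arctan_zero]
    exact Real.arctan_strictMono (by positivity)
  have hθpos : 0 < θ := by positivity
  have hθltπ : θ < Real.pi := by
    have h1 := Real.arcsin_le_pi_div_two d
    have h2 := Real.arctan_lt_pi_div_two (d/s)
    rw [hθdef]
    linarith [Real.pi_pos]
  -- pointwise upper bound
  have hax : ∀ x : ℝ, a - (x:ℂ) ≠ 0 := by
    intro x h0
    have := congrArg Complex.im h0
    simp at this
    linarith
  have hbx : ∀ x : ℝ, b - (x:ℂ) ≠ 0 := by
    intro x h0
    have := congrArg Complex.im h0
    simp at this
    linarith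
  have hre : ∀ x : ℝ, ((a - (x:ℂ))/(b - (x:ℂ))).re
      = ((a.re-x)*(b.re-x) + a.im*b.im)/Complex.normSq (b - (x:ℂ)) := by
    intro x
    rw [Complex.div_re]
    congr 1
    simp [Complex.sub_re, Complex.sub_im]
    ring
  have him : ∀ x : ℝ, ((a - (x:ℂ))/(b - (x:ℂ))).im
      = (a.im*(b.re-x) - b.im*(a.re-x))/Complex.normSq (b - (x:ℂ)) := by
    intro x
    rw [Complex.div_im]
    congr 1
    simp [Complex.sub_re, Complex.sub_im]
    ring
  have hup : ∀ x : ℝ, |((a - (x:ℂ))/(b - (x:ℂ))).arg| ≤ θ := by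
    intro x
    have hz : (a - (x:ℂ))/(b - (x:ℂ)) ≠ 0 := div_ne_zero (hax x) (hbx x)
    apply abs_arg_le_of_cone hz hθpos hθltπ.le
    have hN : 0 < Complex.normSq (b - (x:ℂ)) := Complex.normSq_pos.mpr (hbx x)
    rw [hre x, him x, hcosθ, hsinθ, abs_div, _root_.abs_of_nonneg hN.le,
      div_mul_div_comm, div_mul_div_comm]
    apply div_le_div_of_nonneg_right _ (by positivity)
    exact core_bound hp hq hs2 hd2 hg2 hdg hx1 hx2 hd hg hs x
  -- the maximizing point
  set r := (a.re+b.re)/(2*g*(g+s)) with hrdef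
  have hgs0 : (2*g*(g+s)) ≠ 0 := by positivity
  have hY0 : 2*g*(g+s)*r - (a.re+b.re) = 0 := by
    rw [hrdef]
    field_simp
    ring
  have hQr : a.im*(b.re-r) - b.im*(a.re-r) = 2*d*s := by
    have h1 := idDQ hp hq hs2 hd2 hg2 hdg r
    have h2 : (2*g*(g+s))*(a.im*(b.re-r) - b.im*(a.re-r)) = (2*g*(g+s))*(2*d*s) := by
      linear_combination h1 - (a.im - b.im)*hY0
    exact mul_left_cancel₀ hgs0 h2
  have hSPr : (d*(g+s))*((a.re-r)*(b.re-r) + a.im*b.im) = (g*s-d^2)*(2*d*s) := by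
    have h1 := idJ1 hp hq hs2 hd2 hg2 hdg hx1 hx2 r
    have h2 : (4*g^2*(g+s))*((d*(g+s))*((a.re-r)*(b.re-r) + a.im*b.im))
        = (4*g^2*(g+s))*((g*s-d^2)*(2*d*s)) := by
      have hY2 : (2*g*(g+s)*r - (a.re+b.re))^2 = 0 := by rw [hY0]; ring
      linear_combination h1 + d*hY2 + (4*g^2*(g+s)*(g*s-d^2))*hQr
    exact mul_left_cancel₀ (by positivity) h2
  have hlow : θ ≤ |((a - (r:ℂ))/(b - (r:ℂ))).arg| := by
    have hz : (a - (r:ℂ))/(b - (r:ℂ)) ≠ 0 := div_ne_zero (hax r) (hbx r)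
    apply le_abs_arg_of_cone hz hθpos.le hθltπ
    have hN : 0 < Complex.normSq (b - (r:ℂ)) := Complex.normSq_pos.mpr (hbx r)
    rw [hre r, him r, hcosθ, hsinθ, hQr, abs_div, _root_.abs_of_nonneg hN.le,
      div_mul_div_comm, div_mul_div_comm]
    apply le_of_eq
    congr 1
    rw [_root_.abs_of_nonneg (by positivity : (0:ℝ) ≤ 2*d*s)]
    linarith [hSPr]
  -- conclude
  have hform : ‖a-b‖ / (2 * Real.sqrt (a.im*b.im)) = d/s := by
    rw [hddef, hsdef, div_div]
  rw [hform, show Real.arcsin (‖a-b‖/2) = Real.arcsin d from rfl]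
  apply le_antisymm
  · exact ciSup_le hup
  · have hbdd : BddAbove (Set.range fun x : ℝ => |((a - (x:ℂ))/(b - (x:ℂ))).arg|) := by
      refine ⟨θ, ?_⟩
      rintro y ⟨x, rfl⟩
      exact hup x
    calc θ ≤ |((a - (r:ℂ))/(b - (r:ℂ))).arg| := hlow
    _ ≤ vAngle a b := le_ciSup hbdd r


end Formula

section Wrappers

lemma vAngle_symm (a b : ℂ) : vAngle a b = vAngle b a := by
  unfold vAngle
  congr 1
  funext x
  rw [show (b - (x:ℂ))/(a - (x:ℂ)) = ((a - (x:ℂ))/(b - (x:ℂ)))⁻¹ from (inv_div _ _).symm,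
    Complex.arg_inv]
  split_ifs with h
  · rw [h]
  · rw [abs_neg]

lemma eq_of_cross_eq (a b : ℂ) (ha : ‖a‖ = 1) (hb : ‖b‖ = 1)
    (hia : 0 < a.im) (hib : 0 < b.im) (hcross : b.im * a.re = a.im * b.re) : a = b := by
  have hnsa : a.re*a.re + a.im*a.im = 1 := by
    have h1 : Complex.normSq a = 1 := by rw [← Complex.sq_norm, ha]; norm_num
    rw [Complex.normSq_apply] at h1; exact h1
  have hnsb : b.re*b.re + b.im*b.im = 1 := by
    have h1 : Complex.normSq b = 1 := by rw [← Complex.sq_norm, hb]; norm_num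
    rw [Complex.normSq_apply] at h1; exact h1
  have hsq : a.im^2*b.re^2 = b.im^2*a.re^2 := by linear_combination (-(b.im*a.re + a.im*b.re))*hcross
  have hre2 : a.re^2 = b.re^2 := by nlinarith
  have him2 : a.im^2 = b.im^2 := by nlinarith
  have him : a.im = b.im := by nlinarith
  have hre : a.re = b.re := by
    have := hcross
    rw [him] at this
    exact mul_left_cancel₀ (ne_of_gt hib) this
  exact Complex.ext hre him

lemma vAngle_formula (a b : ℂ) (ha : ‖a‖ = 1) (hb : ‖b‖ = 1)
    (hia : 0 < a.im) (hib : 0 < b.im) (hab : a ≠ b) :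
    vAngle a b = Real.arcsin (‖a-b‖/2)
      + Real.arctan (‖a-b‖ / (2 * Real.sqrt (a.im*b.im))) := by
  rcases lt_trichotomy (b.im * a.re) (a.im * b.re) with hlt | heq | hgt
  · exact vAngle_formula_oriented a b ha hb hia hib hlt
  · exact absurd (eq_of_cross_eq a b ha hb hia hib heq) hab
  · have h1 := vAngle_formula_oriented b a hb ha hib hia (by linarith)
    rw [vAngle_symm a b, h1, norm_sub_rev b a, mul_comm b.im a.im]

lemma arcsin_le_arctan_pair (a b : ℂ) (ha : ‖a‖ = 1) (hb : ‖b‖ = 1)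
    (hia : 0 < a.im) (hib : 0 < b.im) (hab : a ≠ b) :
    Real.arcsin (‖a-b‖/2)
      ≤ Real.arctan (‖a-b‖ / (2 * Real.sqrt (a.im*b.im))) := by
  have hnsa : a.re*a.re + a.im*a.im = 1 := by
    have h1 : Complex.normSq a = 1 := by rw [← Complex.sq_norm, ha]; norm_num
    rw [Complex.normSq_apply] at h1; exact h1
  have hnsb : b.re*b.re + b.im*b.im = 1 := by
    have h1 : Complex.normSq b = 1 := by rw [← Complex.sq_norm, hb]; norm_num
    rw [Complex.normSq_apply] at h1; exact h1
  have hp : a.re^2 + a.im^2 = 1 := by linear_combination hnsa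
  have hq : b.re^2 + b.im^2 = 1 := by linear_combination hnsb
  set d := ‖a-b‖/2 with hddef
  set g := ‖a+b‖/2 with hgdef
  set s := Real.sqrt (a.im*b.im) with hsdef
  have hd : 0 < d := by
    have : a - b ≠ 0 := sub_ne_zero.mpr hab
    have := norm_pos_iff.mpr this
    positivity
  have hg : 0 < g := by
    have h1 : a + b ≠ 0 := by
      intro h0
      have := congrArg Complex.im h0
      simp [Complex.add_im] at this
      linarith
    have := norm_pos_iff.mpr h1
    positivity
  have hs : 0 < s := Real.sqrt_pos.mpr (mul_pos hia hib)
  have hs2 : s^2 = a.im*b.im := Real.sq_sqrt (mul_pos hia hib).le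
  have hd2 : d^2 = (1 - a.re*b.re - a.im*b.im)/2 := by
    have h2 : (‖a-b‖)^2 = (a.re-b.re)^2 + (a.im-b.im)^2 := by
      rw [Complex.sq_norm, Complex.normSq_apply]
      simp [Complex.sub_re, Complex.sub_im]
      ring
    rw [hddef, div_pow, h2]
    linear_combination (1/4)*hp + (1/4)*hq
  have hg2 : g^2 = (1 + a.re*b.re + a.im*b.im)/2 := by
    have h2 : (‖a+b‖)^2 = (a.re+b.re)^2 + (a.im+b.im)^2 := by
      rw [Complex.sq_norm, Complex.normSq_apply]
      simp [Complex.add_re, Complex.add_im]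
      ring
    rw [hgdef, div_pow, h2]
    linear_combination (1/4)*hp + (1/4)*hq
  have hg2' : g^2 = 1 - d^2 := by rw [hd2, hg2]; ring
  have hd1 : d < 1 := by nlinarith
  have honeadd : 0 ≤ 1 + a.re*b.re - a.im*b.im := by
    apply one_add_nonneg hp hq
    nlinarith [sq_nonneg d]
  have hsleg : s ≤ g := by nlinarith
  have hform : ‖a-b‖ / (2 * Real.sqrt (a.im*b.im)) = d/s := by
    rw [hddef, hsdef, div_div]
  rw [hform]
  have harc : Real.arcsin d = Real.arctan (d / Real.sqrt (1 - d^2)) :=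
    Real.arcsin_eq_arctan ⟨by linarith, by linarith⟩
  have hsg : Real.sqrt (1 - d^2) = g := by
    rw [show (1:ℝ) - d^2 = g^2 from by linarith]
    exact Real.sqrt_sq hg.le
  rw [harc, hsg]
  apply Real.arctan_strictMono.monotone
  apply div_le_div_of_nonneg_left hd.le hs
  exact hsleg

end Wrappers

section Main

set_option maxHeartbeats 1000000 in
theorem vAngle_quasi_invariance (τ : ℝ) (hτ : -1 < τ) (hτ' : τ < 1)
    (h : ℂ → ℂ) (hdef : ∀ z : ℂ, h z = (z - (τ : ℂ)) / (1 - (τ : ℂ) * z))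
    (a b : ℂ) (ha : ‖a‖ = 1) (hb : ‖b‖ = 1)
    (hia : 0 < a.im) (hib : 0 < b.im) (hab : a ≠ b) :
    vAngle a b / 2 < vAngle (h a) (h b) ∧ vAngle (h a) (h b) < 2 * vAngle a b := by
  have hττ : 0 < 1 - τ^2 := by nlinarith
  have habsτ : |τ| < 1 := abs_lt.mpr ⟨hτ, hτ'⟩
  -- denominators do not vanish
  have hden : ∀ z : ℂ, ‖z‖ = 1 → 1 - (τ:ℂ)*z ≠ 0 := by
    intro z hz h0
    rw [sub_eq_zero] at h0
    have h2 := congrArg norm h0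
    simp only [norm_one, norm_mul, Complex.norm_real, Real.norm_eq_abs, hz, mul_one] at h2
    rw [← h2] at habsτ
    exact lt_irrefl _ habsτ
  -- absolute value is preserved
  have habs1 : ∀ z : ℂ, ‖z‖ = 1 → ‖h z‖ = 1 := by
    intro z hz
    have hz1 : z * conj z = 1 := by
      rw [Complex.mul_conj]
      norm_cast
      rw [← Complex.sq_norm, hz]; norm_num
    have key : 1 - (τ:ℂ)*z = z * conj (z - (τ:ℂ)) := by
      rw [map_sub, mul_sub, hz1]
      simp [Complex.conj_ofReal]
      ring
    rw [hdef z, norm_div, key, norm_mul, Complex.norm_conj]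
    have hzz : ‖z‖ = 1 := hz
    rw [hzz, one_mul]
    apply div_self
    intro h0
    have : z - (τ:ℂ) = 0 := by
      simpa using norm_eq_zero.mp h0
    have h1 : 1 - (τ:ℂ)*z ≠ 0 := hden z hz
    rw [key, this] at h1
    simp at h1
  -- imaginary part formula
  have himz : ∀ z : ℂ, (1 - (τ:ℂ)*z) ≠ 0 →
      (h z).im = z.im * (1 - τ^2) / Complex.normSq (1 - (τ:ℂ)*z) := by
    intro z hz
    rw [hdef z, Complex.div_im]
    congr 1
    simp [Complex.sub_re, Complex.sub_im, Complex.mul_re, Complex.mul_im]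
    ring
  have him1 : ∀ z : ℂ, ‖z‖ = 1 → 0 < z.im → 0 < (h z).im := by
    intro z hz hzim
    rw [himz z (hden z hz)]
    have : 0 < Complex.normSq (1 - (τ:ℂ)*z) := Complex.normSq_pos.mpr (hden z hz)
    positivity
  -- h is injective on our points
  have hne : h a ≠ h b := by
    intro heq
    rw [hdef a, hdef b, div_eq_div_iff (hden a ha) (hden b hb)] at heq
    have h1 : (a - b)*(1 - (τ:ℂ)^2) = 0 := by linear_combination heq
    rcases mul_eq_zero.mp h1 with h2 | h2
    · exact hab (sub_eq_zero.mp h2)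
    · have : ((1 - τ^2 : ℝ) : ℂ) = 0 := by push_cast; linear_combination h2
      rw [Complex.ofReal_eq_zero] at this
      linarith
  -- invariance of the arctan argument
  have hNA : 0 < Complex.normSq (1 - (τ:ℂ)*a) := Complex.normSq_pos.mpr (hden a ha)
  have hNB : 0 < Complex.normSq (1 - (τ:ℂ)*b) := Complex.normSq_pos.mpr (hden b hb)
  have key1 : h a - h b = (a-b)*((1:ℂ)-(τ:ℂ)^2)/((1-(τ:ℂ)*a)*(1-(τ:ℂ)*b)) := by
    have h1 := hden a ha
    have h2 := hden b hb
    rw [hdef a, hdef b, div_sub_div _ _ h1 h2]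
    congr 1
    ring
  have hns1 : Complex.normSq (h a - h b)
      = Complex.normSq (a-b) * (1-τ^2)^2 / (Complex.normSq (1-(τ:ℂ)*a) * Complex.normSq (1-(τ:ℂ)*b)) := by
    rw [key1, map_div₀, map_mul, map_mul]
    congr 2
    rw [show (1:ℂ)-(τ:ℂ)^2 = ((1-τ^2 : ℝ) : ℂ) from by push_cast; ring,
      Complex.normSq_ofReal]
    ring
  have hAinv : ‖h a - h b‖ / (2 * Real.sqrt ((h a).im * (h b).im))
      = ‖a-b‖ / (2 * Real.sqrt (a.im*b.im)) := by
    have hw : 0 < (h a).im * (h b).im :=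
      mul_pos (him1 a ha hia) (him1 b hb hib)
    have hw' : 0 < a.im*b.im := mul_pos hia hib
    apply eq_of_sq_eq_of_mul_nonneg
    · rw [div_pow, div_pow, mul_pow, mul_pow,
        Real.sq_sqrt hw.le, Real.sq_sqrt hw'.le,
        Complex.sq_norm, Complex.sq_norm,
        himz a (hden a ha), himz b (hden b hb), hns1]
      rw [div_eq_div_iff (by positivity) (by positivity)]
      field_simp
    · positivity
  -- formulas for both pairs
  have hf1 := vAngle_formula a b ha hb hia hib hab
  have hf2 := vAngle_formula (h a) (h b) (habs1 a ha) (habs1 b hb)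
    (him1 a ha hia) (him1 b hb hib) hne
  rw [hAinv] at hf2
  set A := Real.arctan (‖a-b‖ / (2 * Real.sqrt (a.im*b.im))) with hAdef
  set δ₁ := Real.arcsin (‖a-b‖/2) with hδ1def
  set δ₂ := Real.arcsin (‖h a - h b‖/2) with hδ2def
  have hδ1pos : 0 < δ₁ := by
    apply Real.arcsin_pos.mpr
    have : a - b ≠ 0 := sub_ne_zero.mpr hab
    have := norm_pos_iff.mpr this
    positivity
  have hδ2pos : 0 < δ₂ := by
    apply Real.arcsin_pos.mpr
    have : h a - h b ≠ 0 := sub_ne_zero.mpr hne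
    have := norm_pos_iff.mpr this
    positivity
  have hδ1leA : δ₁ ≤ A := arcsin_le_arctan_pair a b ha hb hia hib hab
  have hδ2leA : δ₂ ≤ A := by
    have := arcsin_le_arctan_pair (h a) (h b) (habs1 a ha) (habs1 b hb)
      (him1 a ha hia) (him1 b hb hib) hne
    rw [hAinv] at this
    exact this
  rw [hf1, hf2]
  constructor
  · linarith
  · linarith

end Main
end

section
/- For all a, b ∈ H²: arcsin(tanh(ρ(a,b)/2)) ≤ v(a,b), and sin(v(a,b)/2) ≤ tanh(ρ(a,b)/2). -/
set_option maxHeartbeats 1000000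

open Complex ComplexConjugate

/-- The inverse hyperbolic tangent. -/
noncomputable def artanh (x : ℝ) : ℝ := Real.log ((1 + x) / (1 - x)) / 2

/-- The hyperbolic metric of the upper half plane:
`ρ(a,b) = 2·artanh(|a − b| / |a − conj(b)|)`. -/
noncomputable def rhoH (a b : ℂ) : ℝ :=
  2 * artanh (‖a - b‖ / ‖a - conj b‖)

lemma tanh_log_half {t : ℝ} (h0 : 0 ≤ t) (h1 : t < 1) :
    Real.tanh (Real.log ((1 + t) / (1 - t)) / 2) = t := by
  have h1' : (0:ℝ) < 1 - t := by linarith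
  have hr : (0:ℝ) < (1 + t) / (1 - t) := by positivity
  set y := Real.exp (Real.log ((1 + t) / (1 - t)) / 2) with hy
  have hy0 : 0 < y := Real.exp_pos _
  have hy2 : y ^ 2 = (1 + t) / (1 - t) := by
    rw [hy, pow_two, ← Real.exp_add, add_halves, Real.exp_log hr]
  rw [Real.tanh_eq_sinh_div_cosh, Real.sinh_eq, Real.cosh_eq, Real.exp_neg, ← hy]
  have hyy : (0:ℝ) < y + y⁻¹ := by positivity
  have key : (y - y⁻¹) / 2 / ((y + y⁻¹) / 2) = (y ^ 2 - 1) / (y ^ 2 + 1) := by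
    have hne : y ^ 2 + 1 ≠ 0 := by positivity
    field_simp
  rw [key, hy2]
  have hd : (1 + t) / (1 - t) + 1 ≠ 0 := by positivity
  rw [div_eq_iff hd]
  field_simp
  ring

lemma le_of_sq_le_sq'' {x y : ℝ} (h : x^2 ≤ y^2) (hy : 0 ≤ y) : x ≤ y := by
  nlinarith [le_abs_self x, _root_.sq_abs x, abs_nonneg x]

lemma cos_abs_arg_div (p q : ℂ) (hp : p ≠ 0) (hq : q ≠ 0) :
    Real.cos |(p / q).arg| =
      (p.re * q.re + p.im * q.im) / (‖p‖ * ‖q‖) := by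
  have hpq : p / q ≠ 0 := div_ne_zero hp hq
  rw [Real.cos_abs, Complex.cos_arg hpq, Complex.div_re, norm_div]
  have h1 : ‖p‖ ≠ 0 := by simpa using hp
  have h2 : ‖q‖ ≠ 0 := by simpa using hq
  have h3 : Complex.normSq q = ‖q‖ * ‖q‖ := by
    rw [← Complex.sq_norm]; ring
  rw [h3]
  field_simp

/-- Key algebraic inequality for the upper bound `sin(v/2) ≤ t`. -/
lemma main_ineq (u w A B P Q S : ℝ) (hA : 0 < A) (hB : 0 < B)
    (hP2 : P^2 = u^2 + A^2) (hQ2 : Q^2 = w^2 + B^2) (hP : 0 < P) (hQ : 0 < Q)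
    (hS2 : S = (u - w)^2 + (A - B)^2) :
    4*(A*B)*(P*Q - (u*w + A*B)) ≤ S*(P*Q + (u*w + A*B))
      ∧ 0 ≤ P*Q - (u*w + A*B) := by
  have hid1 : (P*Q)^2 = (u*w + A*B)^2 + (A*w - B*u)^2 := by
    rw [mul_pow, hP2, hQ2]; ring
  have hid2 : (P*Q)^2 = (u*w - A*B)^2 + (A*w + B*u)^2 := by
    rw [mul_pow, hP2, hQ2]; ring
  have hPQ : 0 < P * Q := mul_pos hP hQ
  have key1 : u*w + A*B ≤ P*Q := by
    refine le_of_sq_le_sq'' ?_ hPQ.le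
    nlinarith [hid1, sq_nonneg (A*w - B*u)]
  have key2 : A*B - u*w ≤ P*Q := by
    refine le_of_sq_le_sq'' ?_ hPQ.le
    nlinarith [hid2, sq_nonneg (A*w + B*u)]
  have hA0 : 0 ≤ P*Q - (u*w + A*B) := by linarith
  have hB0 : 2*(A*B) ≤ P*Q + (u*w + A*B) := by linarith
  have hs2' : S = P^2 + Q^2 - 2*(u*w + A*B) := by
    rw [hS2, hP2, hQ2]; ring
  have hS0 : 2*(P*Q - (u*w + A*B)) ≤ S := by
    nlinarith [sq_nonneg (P - Q), hs2']
  refine ⟨?_, hA0⟩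
  have hprod := mul_le_mul hB0 hS0 (by linarith) (by nlinarith [mul_pos hA hB])
  linarith

/-- Discriminant inequality ensuring the witness point exists. -/
lemma delta_ineq (d s m n A B : ℝ) (hs : 0 < s) (hm0 : 0 < m) (hn0 : 0 ≤ n)
    (hnd : n^2 = d^2) (hns : n ≤ s) (hme : m ≤ A + B) :
    d^2*(4*m^2 - s^2) ≤ 4*m*s*n*(A + B) := by
  rcases le_or_gt (4*m^2) (s^2) with h | h
  · have h1 : d^2*(4*m^2 - s^2) ≤ 0 :=
      mul_nonpos_of_nonneg_of_nonpos (sq_nonneg d) (by linarith)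
    have hAB : 0 ≤ A + B := by linarith
    have h2 : 0 ≤ 4*m*s*n*(A+B) := by positivity
    linarith
  · have hns' : 0 ≤ n*s := mul_nonneg hn0 (le_of_lt hs)
    have h1 : n^2*(4*m^2-s^2) ≤ (n*s)*(4*m^2-s^2) := by
      have h5 := mul_nonneg (mul_nonneg (sub_nonneg.2 hns) hn0)
        (show (0:ℝ) ≤ 4*m^2-s^2 by linarith)
      nlinarith [h5]
    have h2 : (n*s)*(4*m^2-s^2) ≤ (n*s)*(4*m^2) := by
      have h5 := mul_nonneg hns' (sq_nonneg s)
      nlinarith [h5]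
    have h3 : (n*s)*(4*m^2) ≤ (n*s)*(4*m*(A+B)) := by
      have h4 := mul_le_mul_of_nonneg_left hme
        (show (0:ℝ) ≤ (n*s)*(4*m) by positivity)
      nlinarith [h4]
    calc d^2*(4*m^2 - s^2) = n^2*(4*m^2-s^2) := by rw [hnd]
      _ ≤ (n*s)*(4*m*(A+B)) := by linarith
      _ = 4*m*s*n*(A+B) := by ring

/-- From the witness inequality to the cosine bound. -/
lemma cr_ineq (Cv Dv P Q s r m : ℝ) (hs : 0 < s) (hr : 0 < r) (hm : 0 < m)
    (hCv : 0 < Cv) (hP : 0 < P) (hQ : 0 < Q) (hD2 : (P*Q)^2 = Cv^2 + Dv^2)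
    (hr2 : r^2 = s^2 + 4*m^2) (hkey : s*Cv ≤ 2*m*|Dv|) : Cv*r ≤ 2*m*(P*Q) := by
  have h2 : 0 ≤ s*Cv := by positivity
  have h3 : (s*Cv)^2 ≤ (2*m*|Dv|)^2 := pow_le_pow_left₀ h2 hkey 2
  have h4 : (2*m*|Dv|)^2 = 4*m^2*Dv^2 := by
    rw [mul_pow, _root_.sq_abs]; ring
  have h3' : Cv^2*s^2 ≤ 4*m^2*Dv^2 := by
    rw [h4] at h3; nlinarith [h3]
  have e1 : Cv^2*r^2 = Cv^2*s^2 + 4*m^2*Cv^2 := by rw [hr2]; ring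
  have e2 : 4*m^2*(P*Q)^2 = 4*m^2*Cv^2 + 4*m^2*Dv^2 := by rw [hD2]; ring
  have hsq2 : (Cv*r)^2 ≤ (2*m*(P*Q))^2 := by nlinarith [h3', e1, e2]
  have hPQ : 0 < P*Q := mul_pos hP hQ
  exact le_of_pow_le_pow_left₀ two_ne_zero (by positivity) hsq2

theorem vAngle_bounds (a b : ℂ) (hia : 0 < a.im) (hib : 0 < b.im) :
    Real.arcsin (Real.tanh (rhoH a b / 2)) ≤ vAngle a b ∧
    Real.sin (vAngle a b / 2) ≤ Real.tanh (rhoH a b / 2) := by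
  have hax : ∀ x : ℝ, a - (x:ℂ) ≠ 0 := by
    intro x h
    have := congrArg Complex.im h
    simp at this
    linarith
  have hbx : ∀ x : ℝ, b - (x:ℂ) ≠ 0 := by
    intro x h
    have := congrArg Complex.im h
    simp at this
    linarith
  have hbdd : BddAbove (Set.range fun x : ℝ => |((a - (x:ℂ)) / (b - (x:ℂ))).arg|) := by
    refine ⟨Real.pi, ?_⟩
    rintro y ⟨x, rfl⟩
    exact Complex.abs_arg_le_pi _
  rcases eq_or_ne a b with rfl | hab
  · have hv : vAngle a a = 0 := by
      have h0 : ∀ x : ℝ, |((a - (x:ℂ)) / (a - (x:ℂ))).arg| = 0 := by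
        intro x
        rw [div_self (hax x)]
        simp
      unfold vAngle
      rw [iSup_congr h0]
      exact ciSup_const
    have hrho : rhoH a a = 0 := by
      unfold rhoH artanh
      simp
    rw [hv, hrho]
    norm_num
  · set s := ‖a - b‖ with hs_def
    set r := ‖a - conj b‖ with hr_def
    have hs : 0 < s := norm_pos_iff.2 (sub_ne_zero.2 hab)
    have hrne : a - conj b ≠ 0 := by
      intro h
      have := congrArg Complex.im h
      simp at this
      linarith
    have hr : 0 < r := norm_pos_iff.2 hrne
    set t := s / r with ht_def
    have ht0 : 0 ≤ t := by positivity
    have hs2 : s ^ 2 = (a.re - b.re) ^ 2 + (a.im - b.im) ^ 2 := by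
      rw [hs_def, Complex.sq_norm, Complex.normSq_apply]
      simp only [Complex.sub_re, Complex.sub_im]
      ring
    have hr2 : r ^ 2 = s ^ 2 + 4 * (a.im * b.im) := by
      rw [hs2, hr_def, Complex.sq_norm, Complex.normSq_apply]
      simp only [Complex.sub_re, Complex.sub_im, Complex.conj_re, Complex.conj_im]
      ring
    clear_value s r
    have ht1 : t < 1 := by
      rw [ht_def, div_lt_one hr]
      have hsr : s^2 < r^2 := by
        have := mul_pos hia hib
        linarith [hr2]
      exact lt_of_pow_lt_pow_left₀ 2 hr.le hsr
    have htanh : Real.tanh (rhoH a b / 2) = t := by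
      have h : rhoH a b / 2 = Real.log ((1 + t) / (1 - t)) / 2 := by
        unfold rhoH artanh
        rw [← hs_def, ← hr_def, ← ht_def]
        ring
      rw [h]
      exact tanh_log_half ht0 ht1
    rw [htanh]
    clear_value t
    have hcos : ∀ x : ℝ, Real.cos |((a - (x:ℂ)) / (b - (x:ℂ))).arg| =
        ((a.re - x) * (b.re - x) + a.im * b.im) /
          (‖a - (x:ℂ)‖ * ‖b - (x:ℂ)‖) := by
      intro x
      rw [cos_abs_arg_div _ _ (hax x) (hbx x)]
      simp only [Complex.sub_re, Complex.sub_im, Complex.ofReal_re, Complex.ofReal_im, sub_zero]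
    have habs2 : ∀ (z : ℂ) (x : ℝ), ‖z - (x:ℂ)‖ ^ 2 = (z.re - x)^2 + z.im^2 := by
      intro z x
      rw [Complex.sq_norm, Complex.normSq_apply]
      simp only [Complex.sub_re, Complex.sub_im, Complex.ofReal_re, Complex.ofReal_im, sub_zero]
      ring
    -- Part 2: pointwise bound
    have hpt : ∀ x : ℝ, |((a - (x:ℂ)) / (b - (x:ℂ))).arg| ≤ 2 * Real.arcsin t := by
      intro x
      set θ := |((a - (x:ℂ)) / (b - (x:ℂ))).arg| with hθ
      have hθ0 : 0 ≤ θ := abs_nonneg _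
      have hθπ : θ ≤ Real.pi := Complex.abs_arg_le_pi _
      set u := a.re - x with hu
      set w := b.re - x with hw
      set P := ‖a - (x:ℂ)‖ with hP_def
      set Q := ‖b - (x:ℂ)‖ with hQ_def
      have hP : 0 < P := norm_pos_iff.2 (hax x)
      have hQ : 0 < Q := norm_pos_iff.2 (hbx x)
      have hP2 : P ^ 2 = u ^ 2 + a.im ^ 2 := habs2 a x
      have hQ2 : Q ^ 2 = w ^ 2 + b.im ^ 2 := habs2 b x
      clear_value θ u w P Q
      have hPQ : 0 < P * Q := mul_pos hP hQ
      have hS2 : s^2 = (u - w)^2 + (a.im - b.im)^2 := by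
        rw [hu, hw, hs2]; ring
      obtain ⟨main, hA⟩ := main_ineq u w a.im b.im P Q (s^2) hia hib hP2 hQ2 hP hQ hS2
      have hsinhalf0 : 0 ≤ Real.sin (θ/2) :=
        Real.sin_nonneg_of_nonneg_of_le_pi (by linarith) (by linarith [Real.pi_pos])
      have hsq : Real.sin (θ/2) ^ 2 ≤ t^2 := by
        have h1 : Real.sin (θ/2) ^ 2 = (1 - Real.cos θ)/2 := by
          rw [Real.sin_sq_eq_half_sub, show 2*(θ/2) = θ by ring]
          ring
        rw [h1, hθ, hcos x, ht_def, div_pow]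
        rw [← hP_def, ← hQ_def]
        have h2PQ : (1 - ((a.re - x) * (b.re - x) + a.im * b.im)/(P*Q))/2
            = (P*Q - (u*w + a.im*b.im))/(2*(P*Q)) := by
          rw [hu, hw]
          field_simp
        rw [h2PQ]
        rw [div_le_div_iff₀ (by positivity) (by positivity)]
        have hr2' : (P*Q - (u*w+a.im*b.im))*r^2
            = (P*Q - (u*w+a.im*b.im))*(s^2 + 4*(a.im*b.im)) := by rw [hr2]
        linarith [main, hr2']
      have hsin : Real.sin (θ/2) ≤ t := le_of_sq_le_sq'' hsq ht0
      have harcs := Real.arcsin_sin (x := θ/2) (by linarith [Real.pi_pos]) (by linarith)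
      have hmono := Real.monotone_arcsin hsin
      rw [harcs] at hmono
      linarith
    have hvA : vAngle a b = ⨆ x : ℝ, |((a - (x:ℂ)) / (b - (x:ℂ))).arg| := rfl
    have hvle : vAngle a b ≤ 2 * Real.arcsin t := by
      rw [hvA]; exact ciSup_le hpt
    have hvup : ∀ y : ℝ, |((a - (y:ℂ)) / (b - (y:ℂ))).arg| ≤ vAngle a b := by
      intro y; rw [hvA]; exact le_ciSup hbdd y
    have hv0 : 0 ≤ vAngle a b := le_trans (abs_nonneg _) (hvup 0)
    have part2 : Real.sin (vAngle a b / 2) ≤ t := by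
      have h1 : vAngle a b / 2 ≤ Real.arcsin t := by linarith
      have harc := Real.arcsin_mem_Icc t
      have hmem1 : vAngle a b / 2 ∈ Set.Icc (-(Real.pi/2)) (Real.pi/2) := by
        constructor
        · simp only [Set.mem_Icc] at harc ⊢
          linarith [Real.pi_pos]
        · linarith [harc.2]
      have hle := Real.strictMonoOn_sin.monotoneOn hmem1 harc h1
      rwa [Real.sin_arcsin (by linarith) (le_of_lt ht1)] at hle
    -- Part 1: the witness point
    set d := a.re - b.re with hd_def
    set e := a.im - b.im with he_def
    set m := Real.sqrt (a.im * b.im) with hm_def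
    have hm0 : 0 < m := Real.sqrt_pos.2 (mul_pos hia hib)
    have hm : m^2 = a.im * b.im := Real.sq_sqrt (le_of_lt (mul_pos hia hib))
    set n := |d| with hn_def
    have hn0 : 0 ≤ n := abs_nonneg d
    have hnd : n^2 = d^2 := sq_abs d
    clear_value d e m n
    have hns : n ≤ s := by
      have h1 : n^2 ≤ s^2 := by rw [hnd, hs2]; nlinarith [sq_nonneg e]
      exact le_of_pow_le_pow_left₀ two_ne_zero (le_of_lt hs) h1
    have hme : m ≤ a.im + b.im := by
      have h1 : a.im * b.im ≤ (a.im + b.im)^2 := by nlinarith [sq_nonneg (a.im - b.im)]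
      calc m = Real.sqrt (a.im * b.im) := hm_def
        _ ≤ Real.sqrt ((a.im + b.im)^2) := Real.sqrt_le_sqrt h1
        _ = a.im + b.im := Real.sqrt_sq (by linarith)
    obtain ⟨ε, hε2, hεd⟩ : ∃ ε : ℝ, ε^2 = 1 ∧ ε * d = -n := by
      rcases le_or_gt 0 d with h | h
      · exact ⟨-1, by norm_num, by rw [hn_def, _root_.abs_of_nonneg h]; ring⟩
      · exact ⟨1, by norm_num, by rw [hn_def, _root_.abs_of_neg h]; ring⟩
    have hΔ : d^2*(4*m^2 - s^2) ≤ 4*m*s*n*(a.im + b.im) :=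
      delta_ineq d s m n a.im b.im hs hm0 hn0 hnd hns hme
    set x0 := (a.re + b.re)/2 - ε*m*e/s with hx0_def
    clear_value x0
    have hux : s*(a.re - x0) = s*d/2 + ε*m*e := by
      rw [hx0_def, hd_def]
      field_simp
      ring
    have hwx : s*(b.re - x0) = -(s*d)/2 + ε*m*e := by
      rw [hx0_def, hd_def]
      field_simp
      ring
    have hG : s*(s*((a.re - x0)*(b.re - x0) + m^2))
        ≤ s*(2*m*(ε*(a.im*(b.re - x0) - b.im*(a.re - x0)))) := by
      have lhsid : s*(s*((a.re - x0)*(b.re - x0) + m^2))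
          = (s*(a.re - x0))*(s*(b.re - x0)) + m^2*s^2 := by ring
      have rhsid : s*(2*m*(ε*(a.im*(b.re - x0) - b.im*(a.re - x0))))
          = 2*m*(ε*(a.im*(s*(b.re - x0)) - b.im*(s*(a.re - x0)))) := by ring
      rw [lhsid, rhsid, hux, hwx]
      have hL : (s*d/2 + ε*m*e)*(-(s*d)/2 + ε*m*e) + m^2*s^2
          = m^2*e^2 - s^2*d^2/4 + m^2*s^2 := by
        linear_combination (m^2*e^2) * hε2
      have hR : 2*m*(ε*(a.im*(-(s*d)/2 + ε*m*e) - b.im*(s*d/2 + ε*m*e)))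
          = m*n*s*(a.im+b.im) + 2*m^2*e^2 := by
        linear_combination (-(m*s*(a.im+b.im)))*hεd + (2*m^2*e*(a.im - b.im))*hε2
          + (-(2*m^2*e))*he_def
      rw [hL, hR]
      have hms2 : m^2*s^2 = m^2*d^2 + m^2*e^2 := by rw [hs2]; ring
      linarith [hΔ, hms2]
    have hkey : s*((a.re - x0)*(b.re - x0) + m^2)
        ≤ 2*m*(ε*(a.im*(b.re - x0) - b.im*(a.re - x0))) :=
      le_of_mul_le_mul_left hG hs
    have hε1 : ε = 1 ∨ ε = -1 := by
      have h : (ε - 1)*(ε + 1) = 0 := by linear_combination hε2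
      rcases mul_eq_zero.1 h with h | h
      · left; linarith
      · right; linarith
    have hDle : ε*(a.im*(b.re - x0) - b.im*(a.re - x0))
        ≤ |a.im*(b.re - x0) - b.im*(a.re - x0)| := by
      rcases hε1 with rfl | rfl
      · rw [one_mul]; exact le_abs_self _
      · rw [neg_one_mul]; exact neg_le_abs _
    have hkeyC : s*((a.re - x0)*(b.re - x0) + a.im*b.im)
        ≤ 2*m*|a.im*(b.re - x0) - b.im*(a.re - x0)| := by
      rw [← hm]
      exact hkey.trans (mul_le_mul_of_nonneg_left hDle (by positivity))
    have hr2m : r^2 = s^2 + 4*m^2 := by rw [hm]; exact hr2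
    have hcosbound : Real.cos |((a - (x0:ℂ)) / (b - (x0:ℂ))).arg| ≤ 2*m/r := by
      rw [hcos x0]
      set P := ‖a - (x0:ℂ)‖ with hP_def
      set Q := ‖b - (x0:ℂ)‖ with hQ_def
      have hP : 0 < P := norm_pos_iff.2 (hax x0)
      have hQ : 0 < Q := norm_pos_iff.2 (hbx x0)
      have hP2 : P ^ 2 = (a.re - x0) ^ 2 + a.im ^ 2 := habs2 a x0
      have hQ2 : Q ^ 2 = (b.re - x0) ^ 2 + b.im ^ 2 := habs2 b x0
      set Cv := (a.re - x0)*(b.re - x0) + a.im*b.im with hCv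
      set Dv := a.im*(b.re - x0) - b.im*(a.re - x0) with hDv
      clear_value P Q Cv Dv
      rcases le_or_gt Cv 0 with h | h
      · have h1 : Cv/(P*Q) ≤ 0 := div_nonpos_iff.mpr (Or.inr ⟨h, by positivity⟩)
        have h2 : (0:ℝ) ≤ 2*m/r := by positivity
        linarith
      · have hD2 : (P*Q)^2 = Cv^2 + Dv^2 := by
          rw [mul_pow, hP2, hQ2, hCv, hDv]; ring
        have hfin : Cv*r ≤ 2*m*(P*Q) :=
          cr_ineq Cv Dv P Q s r m hs hr hm0 h hP hQ hD2 hr2m hkeyC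
        rw [div_le_div_iff₀ (by positivity) hr]
        linarith
    have harc0 : 0 ≤ Real.arcsin t := Real.arcsin_nonneg.2 ht0
    have hcosarc : Real.cos (Real.arcsin t) = 2*m/r := by
      rw [Real.cos_arcsin]
      have h : 1 - t^2 = (2*m/r)^2 := by
        rw [ht_def, div_pow, div_pow]
        rw [eq_div_iff (by positivity)]
        field_simp
        linear_combination hr2 - 4*hm
      rw [h, Real.sqrt_sq (by positivity)]
    have hθx : Real.arcsin t ≤ |((a - (x0:ℂ)) / (b - (x0:ℂ))).arg| := by
      by_contra hcon
      push_neg at hcon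
      have hmem1 : |((a - (x0:ℂ)) / (b - (x0:ℂ))).arg| ∈ Set.Icc 0 Real.pi :=
        ⟨abs_nonneg _, Complex.abs_arg_le_pi _⟩
      have hmem2 : Real.arcsin t ∈ Set.Icc 0 Real.pi :=
        ⟨harc0, le_trans (Real.arcsin_le_pi_div_two t) (by linarith [Real.pi_pos])⟩
      have hlt := Real.strictAntiOn_cos hmem1 hmem2 hcon
      rw [hcosarc] at hlt
      linarith
    exact ⟨le_trans hθx (hvup x0), part2⟩
end

section
/- For all a, b ∈ H²: arctan(sinh(ρ(a,b)/2)) ≤ v(a,b) ≤ 2·arctan(sinh(ρ(a,b)/2)). -/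
open Complex ComplexConjugate

lemma abs_sq_eq (z : ℂ) : ‖z‖ ^ 2 = z.re ^ 2 + z.im ^ 2 := by
  rw [Complex.sq_norm, Complex.normSq_apply]; ring

lemma sinh_rhoH_half (a b : ℂ) (hia : 0 < a.im) (hib : 0 < b.im) :
    Real.sinh (rhoH a b / 2) =
      ‖a - b‖ / (2 * Real.sqrt (a.im * b.im)) := by
  set L := ‖a - b‖ with hLdef
  set M := ‖a - conj b‖ with hMdef
  set D := Real.sqrt (a.im * b.im) with hDdef
  have hAB : 0 < a.im * b.im := mul_pos hia hib
  have hD0 : 0 < D := Real.sqrt_pos.2 hAB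
  have hD2 : D ^ 2 = a.im * b.im := Real.sq_sqrt hAB.le
  have hL0 : 0 ≤ L := norm_nonneg _
  have hM2 : M ^ 2 = L ^ 2 + 4 * (a.im * b.im) := by
    rw [hLdef, hMdef, abs_sq_eq, abs_sq_eq]
    simp only [Complex.sub_re, Complex.sub_im, Complex.conj_re, Complex.conj_im]
    ring
  have hM0 : 0 < M := by
    have := norm_nonneg (a - conj b)
    nlinarith
  have hML : L < M := by nlinarith
  set q := (L + M) / (2 * D) with hqdef
  have hq0 : 0 < q := by
    apply div_pos (by linarith) (by linarith)
  have hq2 : q ^ 2 * (M - L) = M + L := by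
    rw [hqdef, div_pow, div_mul_eq_mul_div, div_eq_iff (by nlinarith : ((2*D)^2 : ℝ) ≠ 0)]
    linear_combination (L + M) * hM2 - 4 * (L + M) * hD2
  have hrho : rhoH a b / 2 = Real.log q := by
    have hLM : L / M < 1 := (div_lt_one hM0).2 hML
    have h1 : (1 + L / M) / (1 - L / M) = (M + L) / (M - L) := by
      rw [div_eq_div_iff (by linarith) (by linarith)]
      field_simp
    have h2 : (M + L) / (M - L) = q ^ 2 := by
      rw [eq_comm, eq_div_iff (by linarith : M - L ≠ 0)]
      exact hq2
    rw [rhoH, artanh]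
    rw [show 2 * (Real.log ((1 + L / M) / (1 - L / M)) / 2) / 2
        = Real.log ((1 + L / M) / (1 - L / M)) / 2 by ring]
    rw [h1, h2, Real.log_pow]
    push_cast
    ring
  rw [hrho, Real.sinh_eq, Real.exp_log hq0, Real.exp_neg, Real.exp_log hq0]
  have hqinv : q⁻¹ = 2 * D / (L + M) := by rw [hqdef, inv_div]
  rw [hqinv, hqdef]
  rw [div_eq_div_iff (by norm_num) (by positivity)]
  field_simp
  ring_nf
  linear_combination hM2 - 4 * hD2

lemma abs_sq_eq' (z : ℂ) : ‖z‖ ^ 2 = z.re ^ 2 + z.im ^ 2 := by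
  rw [Complex.sq_norm, Complex.normSq_apply]; ring

lemma arg_div_eq_arg_mul_conj (u w : ℂ) (hw : w ≠ 0) :
    (u / w).arg = (u * conj w).arg := by
  have h : u / w = (((Complex.normSq w)⁻¹ : ℝ) : ℂ) * (u * conj w) := by
    rw [div_eq_mul_inv, Complex.inv_def]
    push_cast
    ring
  rw [h, Complex.arg_real_mul _ (inv_pos.2 (Complex.normSq_pos.2 hw))]

lemma ne_zero_of_im_pos {z : ℂ} (h : 0 < z.im) : z ≠ 0 := by
  intro hz; rw [hz] at h; simp at h

set_option maxHeartbeats 1000000 in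
/-- the pure-real inequality behind the upper bound -/
lemma key_upper (A B ur wr L N R I r m : ℝ) (hA : 0 < A) (hB : 0 < B)
    (hL0 : 0 ≤ L) (hN0 : 0 < N) (hN2 : N ^ 2 = R ^ 2 + I ^ 2)
    (hR : R = ur * wr + A * B) (hI : I = A * wr - B * ur)
    (hNrm : N = r * m) (hr2 : r ^ 2 = ur ^ 2 + A ^ 2) (hm2 : m ^ 2 = wr ^ 2 + B ^ 2)
    (hL2 : L ^ 2 = (ur - wr) ^ 2 + (A - B) ^ 2) :
    (4 * (A * B) - L ^ 2) * N ≤ (L ^ 2 + 4 * (A * B)) * R := by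
  have hAB : 0 < A * B := mul_pos hA hB
  have hL2' : L ^ 2 = r ^ 2 + m ^ 2 - 2 * R := by rw [hL2, hr2, hm2, hR]; ring
  have h1 : 2 * N - 2 * R ≤ L ^ 2 := by
    have hrm : 2 * (r * m) ≤ r ^ 2 + m ^ 2 := by nlinarith [sq_nonneg (r - m)]
    rw [hNrm]; linarith
  have hRN1 : R ≤ N := by nlinarith [sq_nonneg I, hN0.le]
  have hRN2 : -N ≤ R := by nlinarith [sq_nonneg I, hN0.le]
  have h3 : 2 * I ^ 2 ≤ L ^ 2 * (N + R) := by
    have t1 : 0 ≤ (L ^ 2 - (2 * N - 2 * R)) * (N + R) :=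
      mul_nonneg (by linarith) (by linarith)
    nlinarith [t1]
  have hfac : I ^ 2 + 4 * (A * B) * R - 4 * (A * B) ^ 2 = (A * wr + B * ur) ^ 2 := by
    rw [hI, hR]; ring
  have hXsq : (2 * I ^ 2 + 4 * (A * B) * R) ^ 2 - (4 * (A * B) * N) ^ 2
      = (2 * I * (A * wr + B * ur)) ^ 2 := by
    linear_combination (-16 * (A * B) ^ 2) * hN2 + (4 * I ^ 2) * hfac
  have hXnn : 0 ≤ 2 * I ^ 2 + 4 * (A * B) * R := by
    have hX : 2 * I ^ 2 + 4 * (A * B) * R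
        = 2 * A ^ 2 * wr ^ 2 + 2 * B ^ 2 * ur ^ 2 + 4 * A ^ 2 * B ^ 2 := by
      rw [hI, hR]; ring
    rw [hX]; positivity
  have h4 : 4 * (A * B) * N ≤ 2 * I ^ 2 + 4 * (A * B) * R := by
    have hsq : (4 * (A * B) * N) ^ 2 ≤ (2 * I ^ 2 + 4 * (A * B) * R) ^ 2 := by
      linarith [hXsq, sq_nonneg (2 * I * (A * wr + B * ur))]
    exact (pow_le_pow_iff_left₀ (by positivity) hXnn two_ne_zero).1 hsq
  linarith [h3, h4]

/-- from the key inequality to the cosine comparison -/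
lemma key_upper_div (AB L N R s : ℝ) (hAB : 0 < AB) (hN0 : 0 < N)
    (hs2 : s ^ 2 * (4 * AB) = L ^ 2)
    (hkey : (4 * AB - L ^ 2) * N ≤ (L ^ 2 + 4 * AB) * R) :
    (1 - s ^ 2) / (1 + s ^ 2) ≤ R / N := by
  rw [div_le_div_iff₀ (by positivity) hN0]
  have e1 : s ^ 2 * (4 * AB) * N = L ^ 2 * N := by rw [hs2]
  have e2 : s ^ 2 * (4 * AB) * R = L ^ 2 * R := by rw [hs2]
  have h5 : (1 - s ^ 2) * N * (4 * AB) ≤ R * (1 + s ^ 2) * (4 * AB) := by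
    nlinarith [hkey, e1, e2]
  exact le_of_mul_le_mul_right h5 (by positivity)

lemma angle_le_aux (a b : ℂ) (hia : 0 < a.im) (hib : 0 < b.im) (x : ℝ) :
    |((a - (x : ℂ)) / (b - (x : ℂ))).arg| ≤
      2 * Real.arctan (‖a - b‖ / (2 * Real.sqrt (a.im * b.im))) := by
  have hAB : 0 < a.im * b.im := mul_pos hia hib
  have hD0 : 0 < Real.sqrt (a.im * b.im) := Real.sqrt_pos.2 hAB
  have hD2 : Real.sqrt (a.im * b.im) ^ 2 = a.im * b.im := Real.sq_sqrt hAB.le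
  have hL0 : 0 ≤ ‖a - b‖ := norm_nonneg _
  set s := ‖a - b‖ / (2 * Real.sqrt (a.im * b.im)) with hsdef
  have hs0 : 0 ≤ s := by positivity
  have hu : a - (x : ℂ) ≠ 0 := ne_zero_of_im_pos (by simp; exact hia)
  have hw : b - (x : ℂ) ≠ 0 := ne_zero_of_im_pos (by simp; exact hib)
  set z : ℂ := (a - (x : ℂ)) * conj (b - (x : ℂ)) with hzdef
  have hz : z ≠ 0 :=
    mul_ne_zero hu (fun h => hw (by simpa using congrArg (starRingEnd ℂ) h))
  have harg : ((a - (x : ℂ)) / (b - (x : ℂ))).arg = z.arg :=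
    arg_div_eq_arg_mul_conj _ _ hw
  have hN0 : 0 < ‖z‖ := norm_pos_iff.2 hz
  have hR : z.re = (a.re - x) * (b.re - x) + a.im * b.im := by
    simp [hzdef, Complex.mul_re]
  have hI : z.im = a.im * (b.re - x) - b.im * (a.re - x) := by
    simp [hzdef, Complex.mul_im]; ring
  have hkey : (4 * (a.im * b.im) - ‖a - b‖ ^ 2) * ‖z‖
      ≤ (‖a - b‖ ^ 2 + 4 * (a.im * b.im)) * z.re := by
    apply key_upper a.im b.im (a.re - x) (b.re - x) _ _ _ z.im
      (‖a - (x:ℂ)‖) (‖b - (x:ℂ)‖) hia hib hL0 hN0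
      (abs_sq_eq' z) hR hI
      (by rw [hzdef, norm_mul, Complex.norm_conj])
      (by rw [abs_sq_eq']; simp)
      (by rw [abs_sq_eq']; simp)
      (by rw [abs_sq_eq']; simp)
  have hs2' : s ^ 2 * (4 * (a.im * b.im)) = ‖a - b‖ ^ 2 := by
    rw [hsdef, div_pow, div_mul_eq_mul_div,
      div_eq_iff (ne_of_gt (pow_pos (mul_pos two_pos hD0) 2))]
    linear_combination (-4 * ‖a - b‖ ^ 2) * hD2
  have hcosz : Real.cos |z.arg| = z.re / ‖z‖ := by
    rw [Real.cos_abs, Complex.cos_arg hz]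
  have hcos2 : Real.cos (2 * Real.arctan s) = (1 - s ^ 2) / (1 + s ^ 2) := by
    rw [Real.cos_two_mul, Real.cos_arctan]
    have h1s : (0:ℝ) < 1 + s ^ 2 := by positivity
    rw [div_pow, one_pow, Real.sq_sqrt h1s.le]
    field_simp
    ring
  have hcosle : Real.cos (2 * Real.arctan s) ≤ Real.cos |z.arg| := by
    rw [hcosz, hcos2]
    exact key_upper_div (a.im * b.im) (‖a - b‖) _ _ s hAB hN0 hs2' hkey
  rw [harg]
  by_contra hcon
  push_neg at hcon
  have hmem1 : 2 * Real.arctan s ∈ Set.Icc 0 Real.pi :=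
    ⟨by nlinarith [Real.arctan_zero ▸ Real.arctan_strictMono.monotone hs0],
     by linarith [Real.arctan_lt_pi_div_two s]⟩
  have hmem2 : |z.arg| ∈ Set.Icc 0 Real.pi := ⟨abs_nonneg _, Complex.abs_arg_le_pi z⟩
  have := Real.strictAntiOn_cos hmem1 hmem2 hcon
  linarith

set_option maxHeartbeats 1000000 in
/-- the pure-real inequality behind the lower bound -/
lemma key_lower (A B c D L R I σ : ℝ) (hA : 0 < A) (hB : 0 < B) (hD0 : 0 < D)
    (hD2 : D ^ 2 = A * B) (hL0 : 0 ≤ L) (hL2 : L ^ 2 = c ^ 2 + (A - B) ^ 2)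
    (hσ : σ ^ 2 = 1) (hsign : 0 ≤ σ * (c * (A - B)))
    (hR : R = 2 * (A * B) - c ^ 2 / 4)
    (hI : I = -(c * (A + B)) / 2 + σ * D * (B - A)) :
    L * R ≤ 2 * D * |I| := by
  have habs : σ * (c * (A - B)) = |c| * |A - B| := by
    have h1 : |σ| = 1 := by
      have hσ' : σ * σ = 1 := by rw [← sq]; exact hσ
      rcases mul_self_eq_one_iff.1 hσ' with rfl | rfl <;> norm_num
    calc σ * (c * (A - B)) = |σ * (c * (A - B))| := (_root_.abs_of_nonneg hsign).symm
      _ = |σ| * (|c| * |A - B|) := by rw [abs_mul, abs_mul]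
      _ = |c| * |A - B| := by rw [h1, one_mul]
  have hI2 : I ^ 2 = (|c| * (A + B) / 2 + D * |A - B|) ^ 2 := by
    rw [hI]
    linear_combination (-(A + B) ^ 2 / 4) * (_root_.sq_abs c)
      + (-(D ^ 2)) * (_root_.sq_abs (A - B))
      + (D ^ 2 * (B - A) ^ 2) * hσ + (D * (A + B)) * habs
  have hS0 : 0 ≤ |c| * (A + B) / 2 + D * |A - B| := by positivity
  have hIabs : |c| * (A + B) / 2 + D * |A - B| ≤ |I| := by
    nlinarith [_root_.sq_abs I, hI2, abs_nonneg I, hS0]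
  have h2D : 2 * D ≤ A + B := by nlinarith [sq_nonneg (A - B)]
  have hLce : L ≤ |c| + |A - B| := by
    nlinarith [abs_nonneg c, abs_nonneg (A - B), _root_.sq_abs c, _root_.sq_abs (A - B),
      mul_nonneg (abs_nonneg c) (abs_nonneg (A - B))]
  have hR2 : R ≤ 2 * D ^ 2 := by nlinarith [sq_nonneg c]
  calc L * R ≤ L * (2 * D ^ 2) := by nlinarith [hL0, hR2]
    _ ≤ (|c| + |A - B|) * (2 * D ^ 2) :=
        mul_le_mul_of_nonneg_right hLce (by positivity)
    _ ≤ 2 * D * (|c| * (A + B) / 2 + D * |A - B|) := by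
        nlinarith [mul_le_mul_of_nonneg_left h2D (mul_nonneg hD0.le (abs_nonneg c))]
    _ ≤ 2 * D * |I| := mul_le_mul_of_nonneg_left hIabs (by positivity)

lemma lower_at (a b : ℂ) (hia : 0 < a.im) (hib : 0 < b.im) (σ : ℝ) (hσ : σ ^ 2 = 1)
    (hsign : 0 ≤ σ * ((a.re - b.re) * (a.im - b.im))) :
    Real.arctan (‖a - b‖ / (2 * Real.sqrt (a.im * b.im))) ≤
      |((a - (((a.re + b.re) / 2 + σ * Real.sqrt (a.im * b.im) : ℝ) : ℂ)) /
        (b - (((a.re + b.re) / 2 + σ * Real.sqrt (a.im * b.im) : ℝ) : ℂ))).arg| := by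
  have hAB : 0 < a.im * b.im := mul_pos hia hib
  have hD0 : 0 < Real.sqrt (a.im * b.im) := Real.sqrt_pos.2 hAB
  have hD2 : Real.sqrt (a.im * b.im) ^ 2 = a.im * b.im := Real.sq_sqrt hAB.le
  have hL0 : 0 ≤ ‖a - b‖ := norm_nonneg _
  set D := Real.sqrt (a.im * b.im) with hDdef
  set x : ℝ := (a.re + b.re) / 2 + σ * D with hxdef
  set s := ‖a - b‖ / (2 * D) with hsdef
  have hu : a - (x : ℂ) ≠ 0 := ne_zero_of_im_pos (by simp; exact hia)
  have hw : b - (x : ℂ) ≠ 0 := ne_zero_of_im_pos (by simp; exact hib)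
  set z : ℂ := (a - (x : ℂ)) * conj (b - (x : ℂ)) with hzdef
  have hz : z ≠ 0 :=
    mul_ne_zero hu (fun h => hw (by simpa using congrArg (starRingEnd ℂ) h))
  have harg : ((a - (x : ℂ)) / (b - (x : ℂ))).arg = z.arg :=
    arg_div_eq_arg_mul_conj _ _ hw
  have hre : z.re = 2 * (a.im * b.im) - (a.re - b.re) ^ 2 / 4 := by
    simp only [hzdef, Complex.mul_re, Complex.sub_re, Complex.sub_im, Complex.conj_re,
      Complex.conj_im, Complex.ofReal_re, Complex.ofReal_im, hxdef]
    linear_combination D ^ 2 * hσ + hD2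
  have him : z.im = -((a.re - b.re) * (a.im + b.im)) / 2 + σ * D * (b.im - a.im) := by
    simp only [hzdef, Complex.mul_im, Complex.sub_re, Complex.sub_im, Complex.conj_re,
      Complex.conj_im, Complex.ofReal_re, Complex.ofReal_im, hxdef]
    ring
  have hL2 : ‖a - b‖ ^ 2 = (a.re - b.re) ^ 2 + (a.im - b.im) ^ 2 := by
    rw [abs_sq_eq]
    simp [Complex.sub_re, Complex.sub_im]
  have hkey : ‖a - b‖ * z.re ≤ 2 * D * |z.im| :=
    key_lower a.im b.im (a.re - b.re) D (‖a - b‖) z.re z.im σ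
      hia hib hD0 hD2 hL0 hL2 hσ hsign hre him
  rw [harg]
  rcases le_or_gt z.re 0 with hRe | hRe
  · have hge : Real.pi / 2 ≤ |z.arg| := by
      by_contra h
      push_neg at h
      rcases Complex.abs_arg_lt_pi_div_two_iff.1 h with h0 | h0
      · linarith
      · exact hz h0
    linarith [Real.arctan_lt_pi_div_two s, hge]
  · have htan : Real.tan |z.arg| = |z.im| / z.re := by
      rcases abs_cases z.arg with ⟨h1, h2⟩ | ⟨h1, h2⟩
      · rw [h1, Complex.tan_arg, _root_.abs_of_nonneg (Complex.arg_nonneg_iff.mp h2)]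
      · rw [h1, Real.tan_neg, Complex.tan_arg,
          _root_.abs_of_neg (Complex.arg_neg_iff.mp h2), neg_div]
    have hs_le : s ≤ |z.im| / z.re := by
      rw [hsdef, div_le_div_iff₀ (by positivity) hRe]
      linarith [hkey]
    have habslt : |z.arg| < Real.pi / 2 :=
      Complex.abs_arg_lt_pi_div_two_iff.2 (Or.inl hRe)
    calc Real.arctan s ≤ Real.arctan (Real.tan |z.arg|) :=
          Real.arctan_strictMono.monotone (htan ▸ hs_le)
      _ = |z.arg| :=
          Real.arctan_tan (by linarith [abs_nonneg z.arg, Real.pi_pos]) habslt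


theorem vAngle_arctan_bounds (a b : ℂ) (hia : 0 < a.im) (hib : 0 < b.im) :
    Real.arctan (Real.sinh (rhoH a b / 2)) ≤ vAngle a b ∧
    vAngle a b ≤ 2 * Real.arctan (Real.sinh (rhoH a b / 2)) := by
  have hsinh := sinh_rhoH_half a b hia hib
  have hbdd : BddAbove (Set.range fun x : ℝ => |((a - (x : ℂ)) / (b - (x : ℂ))).arg|) := by
    refine ⟨Real.pi, ?_⟩
    rintro y ⟨x, rfl⟩
    exact Complex.abs_arg_le_pi _
  constructor
  · rw [hsinh]
    simp only [vAngle]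
    rcases le_or_gt 0 ((a.re - b.re) * (a.im - b.im)) with hs | hs
    · have h := lower_at a b hia hib 1 (by norm_num) (by rw [one_mul]; exact hs)
      exact h.trans (le_ciSup hbdd _)
    · have h := lower_at a b hia hib (-1) (by norm_num) (by nlinarith)
      exact h.trans (le_ciSup hbdd _)
  · rw [hsinh]
    simp only [vAngle]
    exact ciSup_le (fun x => angle_le_aux a b hia hib x)
end

section
/- Let α, β, γ be real numbers with 0 ≤ γ < β < α < π, and set a = exp(iα), b = exp(iβ), c = exp(iγ). Then |c + a·b| < |a + b|. -/
open Complex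

lemma abs_exp_add_exp_sq (x y : ℝ) :
    ‖Complex.exp (x * Complex.I) + Complex.exp (y * Complex.I)‖ ^ 2
      = 2 + 2 * Real.cos (x - y) := by
  rw [Complex.sq_norm, Complex.exp_mul_I, Complex.exp_mul_I]
  simp [Complex.normSq_apply, Real.cos_sub, Complex.cos_ofReal_re, Complex.sin_ofReal_re]
  nlinarith [Real.sin_sq_add_cos_sq x, Real.sin_sq_add_cos_sq y]

theorem abs_add_lt (α β γ : ℝ) (hγ : 0 ≤ γ) (hγβ : γ < β) (hβα : β < α)
    (hα : α < Real.pi)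
    (a b c : ℂ)
    (ha : a = Complex.exp (α * Complex.I))
    (hb : b = Complex.exp (β * Complex.I))
    (hc : c = Complex.exp (γ * Complex.I)) :
    ‖c + a * b‖ < ‖a + b‖ := by
  have hab : a * b = Complex.exp ((↑(α + β) : ℂ) * Complex.I) := by
    rw [ha, hb, ← Complex.exp_add]; push_cast; ring_nf
  have h1 : ‖c + a * b‖ ^ 2 = 2 + 2 * Real.cos (γ - (α + β)) := by
    rw [hc, hab, abs_exp_add_exp_sq]
  have h2 : ‖a + b‖ ^ 2 = 2 + 2 * Real.cos (α - β) := by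
    rw [ha, hb, abs_exp_add_exp_sq]
  have hcos : Real.cos (γ - (α + β)) < Real.cos (α - β) := by
    rw [← Real.cos_neg (γ - (α + β))]
    have hy : -(γ - (α + β)) = α + β - γ := by ring
    rw [hy]
    rcases le_or_gt (α + β - γ) Real.pi with h | h
    · exact Real.cos_lt_cos_of_nonneg_of_le_pi (by linarith) h (by linarith)
    · have := Real.cos_pi_sub (α + β - γ - Real.pi)
      have h2pi : α + β - γ = 2 * Real.pi - (2 * Real.pi - (α + β - γ)) := by ring
      rw [h2pi, Real.cos_two_pi_sub]
      exact Real.cos_lt_cos_of_nonneg_of_le_pi (by linarith) (by linarith) (by linarith)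
  refine lt_of_pow_lt_pow_left₀ 2 (norm_nonneg _) ?_
  rw [h1, h2]; linarith
end

section
/- Let a, b ∈ ℂ with |a| = |b| = 1, Im(a) > 0, Im(b) > 0 and a ≠ b. Then u = (1 + a·b)/(a + b) is a real number with −1 < u < 1, and u (regarded as a point of ℂ) is collinear with the pair of points a and conj(b), and also collinear with the pair of points b and conj(a). -/
open Complex ComplexConjugate

lemma collinear_aux3 (p q r : ℂ) (t : ℝ) (h : q - p = t • (r - p)) :
    Collinear ℝ ({p, q, r} : Set ℂ) := by
  have hq : q = AffineMap.lineMap p r t := by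
    rw [AffineMap.lineMap_apply]
    simp only [vsub_eq_sub, vadd_eq_add]
    rw [← h]; ring
  have hmem : q ∈ affineSpan ℝ ({p, r} : Set ℂ) := by
    rw [hq]; exact AffineMap.lineMap_mem_affineSpan_pair _ _ _
  have h3 := collinear_insert_of_mem_affineSpan_pair hmem
  have hset : ({p, q, r} : Set ℂ) = insert q {p, r} := by
    ext x; simp only [Set.mem_insert_iff, Set.mem_singleton_iff]; tauto
  rw [hset]; exact h3

theorem u_real_and_collinear (a b : ℂ)
    (ha : ‖a‖ = 1) (hb : ‖b‖ = 1)
    (hia : 0 < a.im) (hib : 0 < b.im) (hab : a ≠ b)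
    (u : ℂ) (hu : u = (1 + a * b) / (a + b)) :
    u.im = 0 ∧ -1 < u.re ∧ u.re < 1 ∧
    Collinear ℝ ({u, a, conj b} : Set ℂ) ∧
    Collinear ℝ ({u, b, conj a} : Set ℂ) := by
  have h1 : a * conj a = 1 := by
    rw [Complex.mul_conj, Complex.normSq_eq_norm_sq, ha]; norm_num
  have h2 : b * conj b = 1 := by
    rw [Complex.mul_conj, Complex.normSq_eq_norm_sq, hb]; norm_num
  have hden : a + b ≠ 0 := by
    intro h
    have : (a + b).im = 0 := by rw [h]; rfl
    simp only [Complex.add_im] at this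
    linarith
  have hden2 : conj a + conj b ≠ 0 := by
    intro h
    have : (conj a + conj b).im = 0 := by rw [h]; rfl
    simp only [Complex.add_im, Complex.conj_im] at this
    linarith
  have hu_conj : conj u = u := by
    rw [hu, map_div₀, map_add, map_one, map_mul, map_add]
    rw [div_eq_div_iff hden2 hden]
    linear_combination (conj b - b) * h1 + (conj a - a) * h2
  have hu_im : u.im = 0 := Complex.conj_eq_iff_im.mp hu_conj
  -- bounds
  have ha2 : a.re * a.re + a.im * a.im = 1 := by
    have := Complex.normSq_eq_norm_sq a
    rw [ha] at this
    simpa [Complex.normSq_apply] using this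
  have hb2 : b.re * b.re + b.im * b.im = 1 := by
    have := Complex.normSq_eq_norm_sq b
    rw [hb] at this
    simpa [Complex.normSq_apply] using this
  have hns : Complex.normSq (1 + a * b) < Complex.normSq (a + b) := by
    simp only [Complex.normSq_apply, Complex.add_re, Complex.add_im, Complex.one_re,
      Complex.one_im, Complex.mul_re, Complex.mul_im]
    nlinarith [mul_pos hia hib, ha2, hb2]
  have habs : ‖1 + a * b‖ < ‖a + b‖ := by
    refine lt_of_pow_lt_pow_left₀ 2 (norm_nonneg _) ?_
    rw [Complex.sq_norm, Complex.sq_norm]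
    exact hns
  have huabs : ‖u‖ < 1 := by
    rw [hu, norm_div]
    rw [div_lt_one (norm_pos_iff.mpr hden)]
    exact habs
  have hre : (u.re : ℂ) = u := Complex.conj_eq_iff_re.mp hu_conj
  have hre_lt : |u.re| < 1 := by
    rw [← Real.norm_eq_abs, ← Complex.norm_real, hre]; exact huabs
  obtain ⟨hl, hr⟩ := abs_lt.mp hre_lt
  -- collinearity
  have h3 : u * (a + b) = 1 + a * b := by rw [hu]; field_simp
  have h4 : u * (conj a + conj b) = 1 + conj a * conj b := by
    have := congrArg conj h3
    simpa [hu_conj, map_mul, map_add] using this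
  have hkey : (a - u) * (b - u) = (conj a - u) * (conj b - u) := by
    linear_combination h4 - h3
  have hau : a - u ≠ 0 := by
    intro h
    have : (a - u).im = 0 := by rw [h]; rfl
    simp only [Complex.sub_im, hu_im] at this
    linarith
  have hbu : b - u ≠ 0 := by
    intro h
    have : (b - u).im = 0 := by rw [h]; rfl
    simp only [Complex.sub_im, hu_im] at this
    linarith
  have hAu : conj a - u ≠ 0 := by
    intro h
    have : (conj a - u).im = 0 := by rw [h]; rfl
    simp only [Complex.sub_im, Complex.conj_im, hu_im] at this
    linarith
  have hBu : conj b - u ≠ 0 := by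
    intro h
    have : (conj b - u).im = 0 := by rw [h]; rfl
    simp only [Complex.sub_im, Complex.conj_im, hu_im] at this
    linarith
  have hT1 : conj ((a - u) / (conj b - u)) = (a - u) / (conj b - u) := by
    rw [map_div₀, map_sub, map_sub, hu_conj, Complex.conj_conj]
    rw [div_eq_div_iff hbu hBu]
    linear_combination -hkey
  have ht1 : ((((a - u) / (conj b - u)).re : ℂ)) = (a - u) / (conj b - u) :=
    Complex.conj_eq_iff_re.mp hT1
  have hcol1 : Collinear ℝ ({u, a, conj b} : Set ℂ) := by
    apply collinear_aux3 u a (conj b) ((a - u) / (conj b - u)).re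
    rw [Complex.real_smul, ht1, div_mul_cancel₀ _ hBu]
  have hT2 : conj ((b - u) / (conj a - u)) = (b - u) / (conj a - u) := by
    rw [map_div₀, map_sub, map_sub, hu_conj, Complex.conj_conj]
    rw [div_eq_div_iff hau hAu]
    linear_combination -hkey
  have ht2 : ((((b - u) / (conj a - u)).re : ℂ)) = (b - u) / (conj a - u) :=
    Complex.conj_eq_iff_re.mp hT2
  have hcol2 : Collinear ℝ ({u, b, conj a} : Set ℂ) := by
    apply collinear_aux3 u b (conj a) ((b - u) / (conj a - u)).re
    rw [Complex.real_smul, ht2, div_mul_cancel₀ _ hAu]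
  exact ⟨hu_im, hl, hr, hcol1, hcol2⟩
end

section
/- Let a, b ∈ H² with Im(a) ≠ Im(b) and Re(a) ≠ Re(b), and set d = ( Im(a·conj(b)) + sgn(Re(a−b))·|a−b|·√(Im(a)·Im(b)) ) / Im(a−b). Then d is a real number and there exists c ∈ ℂ with Im(c) > 0, Re(c) = d, and |c − a| = |c − b| = Im(c); that is, the circle through a and b centered at c is tangent to the real axis at the point d. -/
open Complex ComplexConjugate

theorem tangent_circle_point (a b : ℂ) (hia : 0 < a.im) (hib : 0 < b.im)
    (him : a.im ≠ b.im) (hre : a.re ≠ b.re)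
    (d : ℝ)
    (hd : d = ((a * conj b).im +
        Real.sign ((a - b).re) * ‖a - b‖ * Real.sqrt (a.im * b.im)) /
        (a - b).im) :
    ∃ c : ℂ, 0 < c.im ∧ c.re = d ∧
      ‖c - a‖ = c.im ∧ ‖c - b‖ = c.im := by
  have ha0 : a.im ≠ 0 := ne_of_gt hia
  have hb0 : b.im ≠ 0 := ne_of_gt hib
  have hne : a.im - b.im ≠ 0 := sub_ne_zero.mpr him
  set S : ℝ := Real.sign ((a - b).re) * ‖a - b‖ * Real.sqrt (a.im * b.im) with hSdef
  have hm : (a * conj b).im = a.im * b.re - a.re * b.im := by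
    simp [Complex.mul_im]; ring
  have h1 : (a.im - b.im) * d = (a.im * b.re - a.re * b.im) + S := by
    rw [hd, hm, Complex.sub_im]
    field_simp
  have hsgn : Real.sign ((a - b).re) ^ 2 = 1 := by
    have h : (a - b).re ≠ 0 := by
      rw [Complex.sub_re]; exact sub_ne_zero.mpr hre
    rcases h.lt_or_gt with h' | h'
    · rw [Real.sign_of_neg h']; norm_num
    · rw [Real.sign_of_pos h']; norm_num
  have habs : (‖a - b‖) ^ 2 = (a.re - b.re) ^ 2 + (a.im - b.im) ^ 2 := by
    rw [Complex.sq_norm, Complex.normSq_apply, Complex.sub_re, Complex.sub_im]; ring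
  have hS : S ^ 2 = ((a.re - b.re) ^ 2 + (a.im - b.im) ^ 2) * (a.im * b.im) := by
    rw [hSdef, mul_pow, mul_pow, hsgn, one_mul, habs,
      Real.sq_sqrt (by positivity : (0:ℝ) ≤ a.im * b.im)]
  have E : b.im * ((d - a.re) ^ 2 + a.im ^ 2) = a.im * ((d - b.re) ^ 2 + b.im ^ 2) := by
    have h2 : (a.im - b.im) ^ 2 * (b.im * ((d - a.re) ^ 2 + a.im ^ 2)) =
        (a.im - b.im) ^ 2 * (a.im * ((d - b.re) ^ 2 + b.im ^ 2)) := by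
      linear_combination
        (-(a.im - b.im) * ((a.im - b.im) * d + S - (a.im * b.re - a.re * b.im))) * h1 +
        (-(a.im - b.im)) * hS
    exact mul_left_cancel₀ (pow_ne_zero 2 hne) h2
  set r : ℝ := ((d - a.re) ^ 2 + a.im ^ 2) / (2 * a.im) with hrdef
  have hr : 0 < r := by
    apply div_pos
    · positivity
    · positivity
  have hra : 2 * r * a.im = (d - a.re) ^ 2 + a.im ^ 2 := by
    rw [hrdef]; field_simp
  have hrb : 2 * r * b.im = (d - b.re) ^ 2 + b.im ^ 2 := by
    have h := E
    rw [← hra] at h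
    apply mul_left_cancel₀ ha0
    linear_combination h
  refine ⟨⟨d, r⟩, hr, rfl, ?_, ?_⟩
  · rw [Complex.norm_def, show Complex.normSq (⟨d, r⟩ - a) = r ^ 2 from ?_,
      Real.sqrt_sq hr.le]
    rw [Complex.normSq_apply, Complex.sub_re, Complex.sub_im]
    simp only
    linear_combination -hra
  · rw [Complex.norm_def, show Complex.normSq (⟨d, r⟩ - b) = r ^ 2 from ?_,
      Real.sqrt_sq hr.le]
    rw [Complex.normSq_apply, Complex.sub_re, Complex.sub_im]
    simp only
    linear_combination -hrb
end

section
/- Let a, b ∈ ℂ with |a| = |b| = 1, Im(a) > 0, Im(b) > 0, Im(a) ≠ Im(b) and Re(a) ≠ Re(b). Then ( Im(a·conj(b)) + sgn(Re(a−b))·|a−b|·√(Im(a)·Im(b)) ) / Im(a−b), regarded as a complex number, equals ( a + b − 2·sgn(Re(a+b))·(a·b·Im(a)·Im(b))^{1/2} ) / (1 + a·b), where (·)^{1/2} denotes the principal complex square root (note that 1 + a·b ≠ 0 since Im(a) ≠ Im(b)). -/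
open Complex ComplexConjugate

lemma cpow_half_eq {z w : ℂ} (hw : w ^ 2 = z) (hre : 0 < w.re) :
    z ^ ((1:ℂ) / 2) = w := by
  have hwne : w ≠ 0 := fun h => by simp [h] at hre
  have hz : z ≠ 0 := by rw [← hw]; exact pow_ne_zero 2 hwne
  have hud : z ^ ((1:ℂ)/2) = Complex.exp (Complex.log z * ((1:ℂ)/2)) :=
    Complex.cpow_def_of_ne_zero hz _
  set u := z ^ ((1:ℂ)/2) with hu
  have hu2 : u ^ 2 = z := by
    rw [hud, sq, ← Complex.exp_add]
    have : Complex.log z * ((1:ℂ)/2) + Complex.log z * ((1:ℂ)/2) = Complex.log z := by ring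
    rw [this, Complex.exp_log hz]
  have hfac : (u - w) * (u + w) = 0 := by linear_combination hu2 - hw
  rcases mul_eq_zero.mp hfac with h | h
  · exact sub_eq_zero.mp h
  · exfalso
    have hure : 0 ≤ u.re := by
      rw [hud, Complex.exp_re]
      apply mul_nonneg (Real.exp_nonneg _)
      have him2 : (Complex.log z * ((1:ℂ)/2)).im = Complex.arg z / 2 := by
        simp [Complex.mul_im, Complex.log_im]
        ring
      rw [him2]
      apply Real.cos_nonneg_of_mem_Icc
      constructor
      · have := Complex.neg_pi_lt_arg z; linarith
      · have := Complex.arg_le_pi z; linarith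
    have : u.re = -w.re := by
      have : u = -w := eq_neg_of_add_eq_zero_left h
      rw [this]; simp
    linarith

theorem d_formula_unit_circle (a b : ℂ)
    (ha : ‖a‖ = 1) (hb : ‖b‖ = 1)
    (hia : 0 < a.im) (hib : 0 < b.im)
    (him : a.im ≠ b.im) (hre : a.re ≠ b.re) :
    ((((a * conj b).im +
        Real.sign ((a - b).re) * ‖a - b‖ * Real.sqrt (a.im * b.im)) /
        (a - b).im : ℝ) : ℂ) =
    (a + b - 2 * (Real.sign ((a + b).re) : ℂ) *
        ((a * b * (a.im : ℂ) * (b.im : ℂ)) ^ ((1 : ℂ) / 2))) / (1 + a * b) := by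
  set p := a.re with hp; set q := a.im with hq
  set r := b.re with hr; set s := b.im with hs
  have h1 : p * p + q * q = 1 := by
    have := Complex.normSq_eq_norm_sq a; rw [ha] at this
    simpa [Complex.normSq_apply] using this
  have h2 : r * r + s * s = 1 := by
    have := Complex.normSq_eq_norm_sq b; rw [hb] at this
    simpa [Complex.normSq_apply] using this
  set k := q * r - p * s with hk
  have hqs : q - s ≠ 0 := sub_ne_zero.mpr him
  have hpr : p - r ≠ 0 := sub_ne_zero.mpr hre
  have hlt : p * r + q * s < 1 := by nlinarith [sq_nonneg (p - r), sq_pos_of_ne_zero hqs]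
  have hid : (p - r) * k = (q + s) * (p * r + q * s - 1) := by
    linear_combination (-s) * h1 + (-q) * h2
  have hksign : (p - r) * k < 0 := by
    rw [hid]; nlinarith
  have hkne : k ≠ 0 := fun h => by rw [h, mul_zero] at hksign; exact lt_irrefl 0 hksign
  set g := Real.sqrt (q * s) with hgdef
  have hgpos : 0 < g := Real.sqrt_pos.mpr (mul_pos hia hib)
  have hg : g ^ 2 = q * s := Real.sq_sqrt (le_of_lt (mul_pos hia hib))
  set M := ‖a - b‖ with hMdef
  set P := ‖a + b‖ with hPdef
  have hM2 : M ^ 2 = (p - r) ^ 2 + (q - s) ^ 2 := by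
    rw [hMdef, Complex.sq_norm, Complex.normSq_apply, Complex.sub_re, Complex.sub_im]; ring
  have hP2 : P ^ 2 = (p + r) ^ 2 + (q + s) ^ 2 := by
    rw [hPdef, Complex.sq_norm, Complex.normSq_apply, Complex.add_re, Complex.add_im]; ring
  have hPpos : 0 < P := by
    have : P ^ 2 > 0 := by rw [hP2]; nlinarith
    nlinarith [norm_nonneg (a+b)]
  have hMP : M * P = 2 * |k| := by
    have hsq : (M * P) ^ 2 = (2 * |k|) ^ 2 := by
      rw [mul_pow, hM2, hP2, mul_pow, _root_.sq_abs]
      linear_combination (p*p+q*q-r*r-s*s) * h1 - (p*p+q*q-r*r-s*s) * h2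
    have h1' : 0 ≤ M * P := mul_nonneg (norm_nonneg _) (norm_nonneg _)
    have h2' : 0 ≤ 2 * |k| := by positivity
    calc M * P = Real.sqrt ((M * P) ^ 2) := (Real.sqrt_sq h1').symm
      _ = Real.sqrt ((2 * |k|) ^ 2) := by rw [hsq]
      _ = 2 * |k| := Real.sqrt_sq h2'
  -- sign * M * P = -2k
  have hsMP : Real.sign ((a - b).re) * (M * P) = -2 * k := by
    have hab : (a - b).re = p - r := by rw [Complex.sub_re]
    rcases mul_neg_iff.mp hksign with ⟨h1', h2'⟩ | ⟨h1', h2'⟩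
    · rw [hab, Real.sign_of_pos (by linarith), hMP, abs_of_neg h2']; ring
    · rw [hab, Real.sign_of_neg (by linarith), hMP, abs_of_pos h2']; ring
  -- complex side facts
  have hna : Complex.normSq a = 1 := by rw [Complex.normSq_eq_norm_sq, ha]; norm_num
  have hnb : Complex.normSq b = 1 := by rw [Complex.normSq_eq_norm_sq, hb]; norm_num
  have hca : a * conj a = 1 := by rw [Complex.mul_conj, hna]; norm_num
  have hcb : b * conj b = 1 := by rw [Complex.mul_conj, hnb]; norm_num
  have hPc : (a + b) * (conj a + conj b) = ((P ^ 2 : ℝ) : ℂ) := by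
    rw [← map_add, Complex.mul_conj, hPdef, ← Complex.sq_norm]
  have hsq : (a + b) ^ 2 = a * b * ((P ^ 2 : ℝ) : ℂ) := by
    linear_combination (a*b) * hPc - b*(a+b) * hca - a*(a+b) * hcb
  have h1ab : 1 + a * b ≠ 0 := by
    intro h
    have habm : a * b = -1 := by linear_combination h
    have hane : a ≠ 0 := by
      intro h0; rw [h0] at ha; simp at ha
    have hbca : b = -conj a := by
      have : a * (b + conj a) = 0 := by linear_combination habm + hca
      rcases mul_eq_zero.mp this with h' | h'
      · exact absurd h' hane
      · linear_combination h'
    have : s = q := by rw [hs, hbca]; simp; exact hq.symm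
    exact him this.symm
  have hC : (k : ℂ) * (1 + a * b) = ((q - s : ℝ) : ℂ) * (a + b) := by
    apply Complex.ext
    · simp only [Complex.mul_re, Complex.ofReal_re, Complex.ofReal_im, Complex.add_re,
        Complex.add_im, Complex.one_re, Complex.one_im, Complex.mul_im, ← hp, ← hq, ← hr, ← hs]
      ring_nf
      linear_combination (-(s*r)) * h1 + (p*q) * h2
    · simp only [Complex.mul_re, Complex.ofReal_re, Complex.ofReal_im, Complex.add_re,
        Complex.add_im, Complex.one_re, Complex.one_im, Complex.mul_im, ← hp, ← hq, ← hr, ← hs]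
      ring_nf
      linear_combination (-(s*s)) * h1 + (q*q) * h2
  -- sign of (a+b).re
  have hprsum : (a + b).re ≠ 0 := by
    rw [Complex.add_re, ← hp, ← hr]
    intro h
    apply him
    have h0 : (q - s) * (q + s) = 0 := by linear_combination h1 - h2 - (p - r) * h
    rcases mul_eq_zero.mp h0 with h' | h'
    · linarith
    · linarith
  set σ := Real.sign ((a + b).re) with hσdef
  have hσ2 : σ ^ 2 = 1 := by
    rcases lt_or_gt_of_ne hprsum with h | h
    · rw [hσdef, Real.sign_of_neg h]; norm_num
    · rw [hσdef, Real.sign_of_pos h]; norm_num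
  have hσre : 0 < σ * (a + b).re := by
    rcases lt_or_gt_of_ne hprsum with h | h
    · rw [hσdef, Real.sign_of_neg h]; linarith
    · rw [hσdef, Real.sign_of_pos h]; linarith
  set w := ((σ * (g / P) : ℝ) : ℂ) * (a + b) with hwdef
  have hPne : ((P : ℝ) : ℂ) ≠ 0 := Complex.ofReal_ne_zero.mpr (ne_of_gt hPpos)
  have hkCne : ((k : ℝ) : ℂ) ≠ 0 := Complex.ofReal_ne_zero.mpr hkne
  have hw2 : w ^ 2 = a * b * ((q : ℝ) : ℂ) * ((s : ℝ) : ℂ) := by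
    have e1 : w ^ 2 = (((σ * (g / P)) ^ 2 : ℝ) : ℂ) * (a + b) ^ 2 := by
      rw [hwdef]; push_cast; ring
    have hc2 : (σ * (g / P)) ^ 2 = g ^ 2 / P ^ 2 := by
      rw [mul_pow, hσ2, one_mul, div_pow]
    rw [e1, hc2, hg, hsq]
    push_cast
    field_simp
  have hwre : 0 < w.re := by
    have e : w.re = (g / P) * (σ * (a + b).re) := by
      rw [hwdef]; simp [Complex.mul_re]; ring
    rw [e]
    exact mul_pos (div_pos hgpos hPpos) hσre
  have hcpow : (a * b * ((q : ℝ) : ℂ) * ((s : ℝ) : ℂ)) ^ ((1:ℂ)/2) = w :=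
    cpow_half_eq hw2 hwre
  have hdim : (a - b).im = q - s := by rw [Complex.sub_im]
  have him' : (a * conj b).im = k := by
    simp only [Complex.mul_im, Complex.conj_re, Complex.conj_im, ← hp, ← hq, ← hr, ← hs, hk]
    ring
  rw [hcpow, hdim, him', eq_div_iff h1ab]
  set d := (k + Real.sign ((a - b).re) * M * g) / (q - s) with hddef
  have hdqs : d * (q - s) = k + Real.sign ((a - b).re) * M * g :=
    div_mul_cancel₀ _ hqs
  have hdP : d * (q - s) * P = k * (P - 2 * g) := by
    rw [hdqs]; linear_combination g * hsMP
  have hdPc : ((d : ℝ) : ℂ) * (((q : ℝ) : ℂ) - ((s : ℝ) : ℂ)) * ((P : ℝ) : ℂ) =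
      ((k : ℝ) : ℂ) * (((P : ℝ) : ℂ) - 2 * ((g : ℝ) : ℂ)) := by
    exact_mod_cast congrArg (fun x : ℝ => (x : ℂ)) hdP
  have hCc : ((k : ℝ) : ℂ) * (1 + a * b) = (((q : ℝ) : ℂ) - ((s : ℝ) : ℂ)) * (a + b) := by
    have := hC; push_cast at this; exact this
  have hσ2C : ((σ : ℝ) : ℂ) ^ 2 = 1 := by exact_mod_cast hσ2
  have hw' : 2 * ((σ : ℝ) : ℂ) * w = ((2 * g / P : ℝ) : ℂ) * (a + b) := by
    rw [hwdef]; push_cast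
    linear_combination (2 * ((g : ℝ) : ℂ) / ((P : ℝ) : ℂ) * (a + b)) * hσ2C
  rw [hw']
  apply mul_left_cancel₀ (mul_ne_zero hkCne hPne)
  have hcC : ((2 * g / P : ℝ) : ℂ) * ((P : ℝ) : ℂ) = 2 * ((g : ℝ) : ℂ) := by
    have h' : (2 * g / P) * P = 2 * g := div_mul_cancel₀ _ (ne_of_gt hPpos)
    exact_mod_cast h'
  linear_combination (((d : ℝ) : ℂ) * ((P : ℝ) : ℂ)) * hCc + (a + b) * hdPc +
    (((k : ℝ) : ℂ) * (a + b)) * hcC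
end

section
/- Let a, b ∈ H² with Re(a) ≠ Re(b) and Im(a) ≠ Im(b), let d = ( Im(a·conj(b)) + sgn(Re(a−b))·|a−b|·√(Im(a)·Im(b)) ) / Im(a−b), and set p = i·( |a|² − |b|² − 2·(a−b)·d ) / (2·Im(a−b)). Then Re(p) = d and |p − a| = |p − b|. -/
open Complex ComplexConjugate

theorem p_on_bisector (a b : ℂ) (hia : 0 < a.im) (hib : 0 < b.im)
    (hre : a.re ≠ b.re) (him : a.im ≠ b.im)
    (d : ℝ)
    (hd : d = ((a * conj b).im +
        Real.sign ((a - b).re) * ‖a - b‖ * Real.sqrt (a.im * b.im)) /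
        (a - b).im)
    (p : ℂ)
    (hp : p = Complex.I * (((‖a‖ ^ 2 : ℝ) : ℂ) - ((‖b‖ ^ 2 : ℝ) : ℂ)
        - 2 * (a - b) * (d : ℂ)) / (2 * (((a - b).im : ℝ) : ℂ))) :
    p.re = d ∧ ‖p - a‖ = ‖p - b‖ := by
  have hm : a.im - b.im ≠ 0 := sub_ne_zero.mpr him
  have hpre : p.re = d := by
    rw [hp]
    simp only [Complex.div_re, Complex.div_im, Complex.normSq_apply, Complex.sub_re,
      Complex.sub_im, Complex.mul_re, Complex.mul_im, Complex.I_re, Complex.I_im,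
      Complex.ofReal_re, Complex.ofReal_im, Complex.re_ofNat, Complex.im_ofNat]
    field_simp
    ring
  have hpim : p.im * (2 * (a.im - b.im)) =
      (a.re ^ 2 + a.im ^ 2) - (b.re ^ 2 + b.im ^ 2) - 2 * (a.re - b.re) * d := by
    rw [hp]
    have h1 : ‖a‖ ^ 2 = a.re ^ 2 + a.im ^ 2 := by
      rw [Complex.sq_norm, Complex.normSq_apply]; ring
    have h2 : ‖b‖ ^ 2 = b.re ^ 2 + b.im ^ 2 := by
      rw [Complex.sq_norm, Complex.normSq_apply]; ring
    simp only [Complex.div_re, Complex.div_im, Complex.normSq_apply, Complex.sub_re,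
      Complex.sub_im, Complex.mul_re, Complex.mul_im, Complex.I_re, Complex.I_im,
      Complex.ofReal_re, Complex.ofReal_im, Complex.re_ofNat, Complex.im_ofNat, h1, h2]
    field_simp
    ring
  refine ⟨hpre, ?_⟩
  rw [Complex.norm_def, Complex.norm_def]
  congr 1
  simp only [Complex.normSq_apply, Complex.sub_re, Complex.sub_im]
  linear_combination -hpim + (2 * b.re - 2 * a.re) * hpre
end

section
/- Let a, b ∈ H² and set m = ( Im(a·b) + i·|a − conj(b)|·√(Im(a)·Im(b)) ) / Im(a+b). Then Im(m) > 0, ρ(a,m) = ρ(m,b), and ρ(a,m) + ρ(m,b) = ρ(a,b); that is, m is the hyperbolic midpoint of a and b in H². -/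
open Complex ComplexConjugate

private lemma eq_of_sq_eq' {x y : ℝ} (hx : 0 ≤ x) (hy : 0 ≤ y) (h : x^2 = y^2) : x = y := by
  rw [← Real.sqrt_sq hx, h, Real.sqrt_sq hy]

private lemma artanh_double {R : ℝ} (_h0 : 0 ≤ R) (h1 : R < 1) :
    artanh (2*R/(1+R^2)) = 2 * artanh R := by
  unfold artanh
  have hne : (0:ℝ) < 1 - R := by linarith
  have h2 : (0:ℝ) < 1 + R^2 := by positivity
  have key : (1 + 2*R/(1+R^2)) / (1 - 2*R/(1+R^2)) = ((1+R)/(1-R))^2 := by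
    rw [div_pow]
    have hden : 1 - 2*R/(1+R^2) = (1-R)^2/(1+R^2) := by field_simp; ring
    have hnum : 1 + 2*R/(1+R^2) = (1+R)^2/(1+R^2) := by field_simp; ring
    rw [hden, hnum, div_div_div_cancel_right₀]
    exact h2.ne'
  rw [key, Real.log_pow]
  ring

set_option maxHeartbeats 1000000 in
theorem hyperbolic_midpoint (a b : ℂ) (hia : 0 < a.im) (hib : 0 < b.im)
    (m : ℂ)
    (hm : m = ((((a * b).im : ℝ) : ℂ) +
        Complex.I * ((‖a - conj b‖ * Real.sqrt (a.im * b.im) : ℝ) : ℂ)) /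
        ((((a + b).im : ℝ) : ℂ))) :
    0 < m.im ∧ rhoH a m = rhoH m b ∧ rhoH a m + rhoH m b = rhoH a b := by
  set p := a.re with hp
  set s := a.im with hs
  set q := b.re with hq
  set t := b.im with ht
  have hD : (0:ℝ) < s + t := by linarith
  set u := Real.sqrt (s*t) with hu
  have hu2 : u^2 = s*t := Real.sq_sqrt (by positivity)
  have hupos : 0 < u := Real.sqrt_pos.mpr (by positivity)
  set L := ‖a - conj b‖ with hLdef
  have hL2 : L^2 = (p-q)^2 + (s+t)^2 := by
    rw [hLdef, Complex.sq_norm, Complex.normSq_apply]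
    simp only [Complex.sub_re, Complex.sub_im, Complex.conj_re, Complex.conj_im]
    ring
  have hLnn : 0 ≤ L := norm_nonneg _
  have hLge : s + t ≤ L := by nlinarith [sq_nonneg (p-q)]
  have hLpos : 0 < L := lt_of_lt_of_le hD hLge
  have hsqrtmul : u = Real.sqrt s * Real.sqrt t := Real.sqrt_mul hia.le t
  have hL2u : 2*u ≤ L := by
    nlinarith [sq_nonneg (Real.sqrt s - Real.sqrt t), Real.sq_sqrt hia.le,
      Real.sq_sqrt hib.le]
  -- components of m
  have hmim : m.im = L * u / (s+t) := by
    rw [hm, Complex.div_ofReal_im]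
    simp [Complex.add_im, Complex.mul_im]
    rfl
  have hmre : m.re = (p*t + s*q) / (s+t) := by
    rw [hm, Complex.div_ofReal_re]
    simp [Complex.add_re, Complex.mul_re, Complex.mul_im]
    rfl
  have hmimpos : 0 < m.im := by
    rw [hmim]; positivity
  refine ⟨hmimpos, ?_⟩
  -- normSq computations
  have k1 : Complex.normSq (a - m) = s*L*(L-2*u)/(s+t) := by
    rw [Complex.normSq_apply]
    simp only [Complex.sub_re, Complex.sub_im, hmre, hmim]
    field_simp
    linear_combination (-s^2) * hL2 + (L^2) * hu2
  have k2 : Complex.normSq (a - conj m) = s*L*(L+2*u)/(s+t) := by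
    rw [Complex.normSq_apply]
    simp only [Complex.sub_re, Complex.sub_im, Complex.conj_re, Complex.conj_im, hmre, hmim]
    field_simp
    linear_combination (-s^2) * hL2 + (L^2) * hu2
  have k3 : Complex.normSq (m - b) = t*L*(L-2*u)/(s+t) := by
    rw [Complex.normSq_apply]
    simp only [Complex.sub_re, Complex.sub_im, hmre, hmim]
    field_simp
    linear_combination (-t^2) * hL2 + (L^2) * hu2
  have k4 : Complex.normSq (m - conj b) = t*L*(L+2*u)/(s+t) := by
    rw [Complex.normSq_apply]
    simp only [Complex.sub_re, Complex.sub_im, Complex.conj_re, Complex.conj_im, hmre, hmim]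
    field_simp
    linear_combination (-t^2) * hL2 + (L^2) * hu2
  have k5 : Complex.normSq (a - b) = L^2 - 4*u^2 := by
    rw [Complex.normSq_apply]
    simp only [Complex.sub_re, Complex.sub_im]
    linear_combination -hL2 + 4 * hu2
  set R := Real.sqrt ((L-2*u)/(L+2*u)) with hR
  have hLu : (0:ℝ) < L + 2*u := by linarith
  have hR2 : R^2 = (L-2*u)/(L+2*u) := Real.sq_sqrt (div_nonneg (by linarith) hLu.le)
  have hRnn : 0 ≤ R := Real.sqrt_nonneg _
  have hR1 : R < 1 := by
    have h : R^2 < 1 := by rw [hR2, div_lt_one hLu]; linarith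
    nlinarith
  have r1 : ‖a - m‖ / ‖a - conj m‖ = R := by
    apply eq_of_sq_eq' (by positivity) hRnn
    rw [div_pow, Complex.sq_norm, Complex.sq_norm, k1, k2, hR2]
    field_simp
  have r2 : ‖m - b‖ / ‖m - conj b‖ = R := by
    apply eq_of_sq_eq' (by positivity) hRnn
    rw [div_pow, Complex.sq_norm, Complex.sq_norm, k3, k4, hR2]
    field_simp
  have h1R : 1 + R^2 = 2*L/(L+2*u) := by rw [hR2]; field_simp; ring
  have rab : ‖a - b‖ / L = 2*R/(1+R^2) := by
    apply eq_of_sq_eq' (by positivity) (by positivity)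
    rw [div_pow, Complex.sq_norm, k5, div_pow, h1R, mul_pow, hR2]
    rw [div_pow, mul_pow]
    field_simp
    ring
  have e1 : rhoH a m = 2 * artanh R := by rw [rhoH, r1]
  have e2 : rhoH m b = 2 * artanh R := by rw [rhoH, r2]
  have e3 : rhoH a b = 2 * artanh (2*R/(1+R^2)) := by rw [rhoH, ← hLdef, rab]
  refine ⟨e1.trans e2.symm, ?_⟩
  rw [e1, e2, e3, artanh_double hRnn hR1]
  ring
end

section
/- Let a, b ∈ H² with Re(a) ≠ Re(b). Set v = ( 2·a·b − |a|² − |b|² − |a−b|·|a−conj(b)| ) / (2i·Im(a+b)) and s = ( 2·a·b − |a|² − |b|² + |a−b|·|a−conj(b)| ) / (2i·Im(a+b)). Then v is collinear with the pair a, a⋆ and with the pair b, b⋆, and s is collinear with the pair a, b⋆ and with the pair b, a⋆; that is, v = LIS[a,a⋆,b,b⋆] and s = LIS[a,b⋆,b,a⋆]. -/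
set_option maxHeartbeats 2000000

open Complex ComplexConjugate

lemma collinear_of_conj_eq (z₁ z₂ z₃ : ℂ)
    (h : (z₂ - z₁) * (conj z₃ - conj z₁) = (conj z₂ - conj z₁) * (z₃ - z₁)) :
    Collinear ℝ ({z₁, z₂, z₃} : Set ℂ) := by
  rcases eq_or_ne z₂ z₁ with h2 | h2
  · rw [h2, Set.insert_comm, Set.insert_eq_self.mpr (by simp : z₁ ∈ ({z₁, z₃} : Set ℂ))]
    exact collinear_pair ℝ z₁ z₃
  · have hd : z₂ - z₁ ≠ 0 := sub_ne_zero.mpr h2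
    have hns : ((Complex.normSq (z₂ - z₁) : ℝ) : ℂ) ≠ 0 := by
      simpa [Complex.normSq_eq_zero] using hd
    have hw : ((((z₃ - z₁) * conj (z₂ - z₁)).re : ℝ) : ℂ) = (z₃ - z₁) * conj (z₂ - z₁) := by
      rw [← Complex.conj_eq_iff_re]
      calc conj ((z₃ - z₁) * conj (z₂ - z₁)) = (z₂ - z₁) * (conj z₃ - conj z₁) := by
            simp [map_mul]; ring
        _ = (conj z₂ - conj z₁) * (z₃ - z₁) := h
        _ = (z₃ - z₁) * conj (z₂ - z₁) := by simp [map_sub]; ring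
    rw [collinear_iff_exists_forall_eq_smul_vadd]
    refine ⟨z₁, z₂ - z₁, ?_⟩
    intro p hp
    simp only [Set.mem_insert_iff, Set.mem_singleton_iff] at hp
    rcases hp with rfl | rfl | rfl
    · exact ⟨0, by simp⟩
    · exact ⟨1, by simp⟩
    · refine ⟨((p - z₁) * conj (z₂ - z₁)).re / Complex.normSq (z₂ - z₁), ?_⟩
      have key : (p - z₁) * ((Complex.normSq (z₂ - z₁) : ℝ) : ℂ)
          = ((p - z₁) * conj (z₂ - z₁)) * (z₂ - z₁) := by
        rw [← Complex.mul_conj]; ring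
      show p = _ • (z₂ - z₁) +ᵥ z₁
      rw [Complex.real_smul, Complex.ofReal_div, hw]
      simp only [map_sub] at key hw ⊢
      rw [vadd_eq_add]
      field_simp
      linear_combination key

lemma key_eq (a b L v t : ℂ) (hL : conj L = L)
    (hL2 : L ^ 2 = (a - b) * (conj a - conj b) * ((a - conj b) * (conj a - b)))
    (hQ0 : a + b - conj a - conj b ≠ 0) (hP0 : a + conj a - b - conj b ≠ 0)
    (hv : v = (2 * a * b - a * conj a - b * conj b - L) / (a + b - conj a - conj b))
    (ht : t = (a * conj a - b * conj b + L) / (a + conj a - b - conj b))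
    (htr : conj t = t) :
    (a - v) * (conj t - conj v) = (conj a - conj v) * (t - v) := by
  have hQ0' : conj a + conj b - a - b ≠ 0 := fun h => hQ0 (by linear_combination -h)
  have hP0' : conj a + a - (conj b + b) ≠ 0 := fun h => hP0 (by linear_combination h)
  rw [htr, hv, ht]
  simp only [map_div₀, map_sub, map_add, map_mul, map_ofNat, Complex.conj_conj, hL]
  field_simp
  linear_combination (-2*(a + b - conj a - conj b)) * hL2

theorem v_s_line_intersections (a b : ℂ) (hia : 0 < a.im) (hib : 0 < b.im)
    (hre : a.re ≠ b.re)
    (astar bstar : ℝ)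
    (hastar : astar = (‖a‖ ^ 2 - ‖b‖ ^ 2 +
        ‖a - b‖ * ‖a - conj b‖) / (2 * (a - b).re))
    (hbstar : bstar = (‖a‖ ^ 2 - ‖b‖ ^ 2 -
        ‖a - b‖ * ‖a - conj b‖) / (2 * (a - b).re))
    (v s : ℂ)
    (hv : v = (2 * a * b - ((‖a‖ ^ 2 : ℝ) : ℂ) - ((‖b‖ ^ 2 : ℝ) : ℂ) -
        ((‖a - b‖ * ‖a - conj b‖ : ℝ) : ℂ)) /
        (2 * Complex.I * (((a + b).im : ℝ) : ℂ)))
    (hs : s = (2 * a * b - ((‖a‖ ^ 2 : ℝ) : ℂ) - ((‖b‖ ^ 2 : ℝ) : ℂ) +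
        ((‖a - b‖ * ‖a - conj b‖ : ℝ) : ℂ)) /
        (2 * Complex.I * (((a + b).im : ℝ) : ℂ))) :
    Collinear ℝ ({v, a, (astar : ℂ)} : Set ℂ) ∧
    Collinear ℝ ({v, b, (bstar : ℂ)} : Set ℂ) ∧
    Collinear ℝ ({s, a, (bstar : ℂ)} : Set ℂ) ∧
    Collinear ℝ ({s, b, (astar : ℂ)} : Set ℂ) := by
  set L : ℂ := ((‖a - b‖ * ‖a - conj b‖ : ℝ) : ℂ) with hLdef
  have hL : conj L = L := Complex.conj_ofReal _
  have hA : ((‖a‖ ^ 2 : ℝ) : ℂ) = a * conj a := by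
    rw [show ‖a‖ ^ 2 = Complex.normSq a from Complex.sq_norm a]
    exact (Complex.mul_conj a).symm
  have hB : ((‖b‖ ^ 2 : ℝ) : ℂ) = b * conj b := by
    rw [show ‖b‖ ^ 2 = Complex.normSq b from Complex.sq_norm b]
    exact (Complex.mul_conj b).symm
  have hL2 : L ^ 2 = (a - b) * (conj a - conj b) * ((a - conj b) * (conj a - b)) := by
    calc L ^ 2 = ((‖a - b‖ ^ 2 : ℝ) : ℂ) * ((‖a - conj b‖ ^ 2 : ℝ) : ℂ) := by
          rw [hLdef]; push_cast; try ring
      _ = ((a - b) * conj (a - b)) * ((a - conj b) * conj (a - conj b)) := by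
          rw [show ‖a - b‖ ^ 2 = Complex.normSq (a - b) from Complex.sq_norm _,
            show ‖a - conj b‖ ^ 2 = Complex.normSq (a - conj b) from Complex.sq_norm _,
            Complex.mul_conj, Complex.mul_conj]
      _ = (a - b) * (conj a - conj b) * ((a - conj b) * (conj a - b)) := by
          simp only [map_sub, Complex.conj_conj]; try ring
  have hQden : 2 * Complex.I * (((a + b).im : ℝ) : ℂ) = a + b - conj a - conj b := by
    have h1 := Complex.sub_conj (a + b)
    simp only [map_add] at h1
    push_cast at h1
    linear_combination -h1
  have hPden : 2 * (((a - b).re : ℝ) : ℂ) = a + conj a - b - conj b := by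
    have h1 := Complex.add_conj (a - b)
    simp only [map_sub] at h1
    push_cast at h1
    linear_combination -h1
  have himne : (a + b).im ≠ 0 := by
    rw [Complex.add_im]; positivity
  have hrene : (a - b).re ≠ 0 := by
    rw [Complex.sub_re]; exact sub_ne_zero.mpr hre
  have hQ0 : a + b - conj a - conj b ≠ 0 := by
    rw [← hQden]
    exact mul_ne_zero (mul_ne_zero two_ne_zero Complex.I_ne_zero)
      (Complex.ofReal_ne_zero.mpr himne)
  have hP0 : a + conj a - b - conj b ≠ 0 := by
    rw [← hPden]
    exact mul_ne_zero two_ne_zero (Complex.ofReal_ne_zero.mpr hrene)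
  have hQ0b : b + a - conj b - conj a ≠ 0 := fun h => hQ0 (by linear_combination h)
  have hP0b : b + conj b - a - conj a ≠ 0 := fun h => hP0 (by linear_combination -h)
  have hv' : v = (2 * a * b - a * conj a - b * conj b - L) / (a + b - conj a - conj b) := by
    rw [hv, hA, hB, hQden]
  have hs' : s = (2 * a * b - a * conj a - b * conj b - -L) / (a + b - conj a - conj b) := by
    rw [sub_neg_eq_add, hs, hA, hB, hQden]
  have hLdef' : L = ((‖a - b‖ : ℝ) : ℂ) * ((‖a - conj b‖ : ℝ) : ℂ) := by
    rw [hLdef]; push_cast; try ring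
  have ha1 : ((astar : ℝ) : ℂ) = (a * conj a - b * conj b + L) / (a + conj a - b - conj b) := by
    rw [hastar]
    simp only [Complex.ofReal_div, Complex.ofReal_add, Complex.ofReal_sub, Complex.ofReal_mul,
      Complex.ofReal_ofNat]
    rw [hA, hB, hPden, ← hLdef']
  have hb1 : ((bstar : ℝ) : ℂ) = (a * conj a - b * conj b - L) / (a + conj a - b - conj b) := by
    rw [hbstar]
    simp only [Complex.ofReal_div, Complex.ofReal_add, Complex.ofReal_sub, Complex.ofReal_mul,
      Complex.ofReal_ofNat]
    rw [hA, hB, hPden, ← hLdef']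
  -- swapped / negated variants
  have hL2ba : L ^ 2 = (b - a) * (conj b - conj a) * ((b - conj a) * (conj b - a)) := by
    linear_combination hL2
  have hL2n : (-L) ^ 2 = (a - b) * (conj a - conj b) * ((a - conj b) * (conj a - b)) := by
    linear_combination hL2
  have hL2nba : (-L) ^ 2 = (b - a) * (conj b - conj a) * ((b - conj a) * (conj b - a)) := by
    linear_combination hL2
  have hLn : conj (-L) = -L := by rw [map_neg, hL]
  have hvba : v = (2 * b * a - b * conj b - a * conj a - L) / (b + a - conj b - conj a) := by
    rw [hv', div_eq_div_iff hQ0 hQ0b]; ring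
  have hsba : s = (2 * b * a - b * conj b - a * conj a - -L) / (b + a - conj b - conj a) := by
    rw [hs', div_eq_div_iff hQ0 hQ0b]; ring
  have hb2 : ((bstar : ℝ) : ℂ) = (b * conj b - a * conj a + L) / (b + conj b - a - conj a) := by
    rw [hb1, div_eq_div_iff hP0 hP0b]; ring
  have hb3 : ((bstar : ℝ) : ℂ) = (a * conj a - b * conj b + -L) / (a + conj a - b - conj b) := by
    rw [hb1, sub_eq_add_neg]
  have ha2 : ((astar : ℝ) : ℂ) = (b * conj b - a * conj a + -L) / (b + conj b - a - conj a) := by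
    rw [ha1, div_eq_div_iff hP0 hP0b]; ring
  refine ⟨?_, ?_, ?_, ?_⟩
  · exact collinear_of_conj_eq v a _
      (key_eq a b L v _ hL hL2 hQ0 hP0 hv' ha1 (Complex.conj_ofReal _))
  · exact collinear_of_conj_eq v b _
      (key_eq b a L v _ hL hL2ba hQ0b hP0b hvba hb2 (Complex.conj_ofReal _))
  · exact collinear_of_conj_eq s a _
      (key_eq a b (-L) s _ hLn hL2n hQ0 hP0 hs' hb3 (Complex.conj_ofReal _))
  · exact collinear_of_conj_eq s b _
      (key_eq b a (-L) s _ hLn hL2nba hQ0b hP0b hsba ha2 (Complex.conj_ofReal _))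
end

section
/- Let a, b ∈ H² with Re(a) ≠ Re(b). Set u = Im(a·b)/Im(a+b), v = ( 2·a·b − |a|² − |b|² − |a−b|·|a−conj(b)| ) / (2i·Im(a+b)), s = ( 2·a·b − |a|² − |b|² + |a−b|·|a−conj(b)| ) / (2i·Im(a+b)), and m = ( Im(a·b) + i·|a − conj(b)|·√(Im(a)·Im(b)) ) / Im(a+b). Then Re(v) = Re(s) = Re(m) = u; consequently the four points u, s, m, v lie on a common vertical line in ℂ. -/
open Complex ComplexConjugate

theorem collinear_points_u_s_m_v (a b : ℂ) (hia : 0 < a.im) (hib : 0 < b.im)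
    (hre : a.re ≠ b.re)
    (u : ℝ) (hu : u = (a * b).im / (a + b).im)
    (v s m : ℂ)
    (hv : v = (2 * a * b - ((‖a‖ ^ 2 : ℝ) : ℂ) - ((‖b‖ ^ 2 : ℝ) : ℂ) -
        ((‖a - b‖ * ‖a - conj b‖ : ℝ) : ℂ)) /
        (2 * Complex.I * (((a + b).im : ℝ) : ℂ)))
    (hs : s = (2 * a * b - ((‖a‖ ^ 2 : ℝ) : ℂ) - ((‖b‖ ^ 2 : ℝ) : ℂ) +
        ((‖a - b‖ * ‖a - conj b‖ : ℝ) : ℂ)) /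
        (2 * Complex.I * (((a + b).im : ℝ) : ℂ)))
    (hm : m = ((((a * b).im : ℝ) : ℂ) +
        Complex.I * ((‖a - conj b‖ * Real.sqrt (a.im * b.im) : ℝ) : ℂ)) /
        ((((a + b).im : ℝ) : ℂ))) :
    v.re = u ∧ s.re = u ∧ m.re = u := by
  have ht : (a + b).im ≠ 0 := by
    simp only [Complex.add_im]; positivity
  subst hu hv hs hm
  refine ⟨?_, ?_, ?_⟩ <;>
  · simp [Complex.div_re, Complex.normSq_apply, Complex.add_im, Complex.mul_im,
      Complex.mul_re, Complex.ofReal_im, Complex.ofReal_re, ← Complex.ofReal_pow]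
    field_simp
end

section
/- Let a, b ∈ ℂ with |a| = |b| = 1, Im(a) > 0, Im(b) > 0 and Im(a) ≠ Im(b). Set c = (a + b)/(1 + a·b) (a real number) and m = ( Im(a·b) + i·|a − conj(b)|·√(Im(a)·Im(b)) ) / Im(a+b). Then the angle ∠(0, m, c) at the vertex m is a right angle; equivalently, Re( conj(m) · (m − c) ) = 0. -/
open Complex ComplexConjugate

theorem right_angle_at_midpoint (a b : ℂ)
    (ha : ‖a‖ = 1) (hb : ‖b‖ = 1)
    (hia : 0 < a.im) (hib : 0 < b.im) (him : a.im ≠ b.im)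
    (c m : ℂ)
    (hc : c = (a + b) / (1 + a * b))
    (hm : m = ((((a * b).im : ℝ) : ℂ) +
        Complex.I * ((‖a - conj b‖ * Real.sqrt (a.im * b.im) : ℝ) : ℂ)) /
        ((((a + b).im : ℝ) : ℂ))) :
    (conj m * (m - c)).re = 0 := by
  set x := a.re with hx
  set y := a.im with hy
  set u := b.re with hu
  set v := b.im with hv
  have hna : x^2 + y^2 = 1 := by
    have h := Complex.sq_norm a
    rw [ha, Complex.normSq_apply] at h
    nlinarith [h]
  have hnb : u^2 + v^2 = 1 := by
    have h := Complex.sq_norm b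
    rw [hb, Complex.normSq_apply] at h
    nlinarith [h]
  have hyv : y + v ≠ 0 := by positivity
  -- 1 + a*b ≠ 0
  have hab : (1 : ℂ) + a * b ≠ 0 := by
    intro h
    have hre : x*u - y*v = -1 := by
      have h2 := congrArg Complex.re h
      simp [Complex.add_re, Complex.mul_re] at h2
      linarith
    have him' : (y - v)^2 > 0 := by
      have : y - v ≠ 0 := sub_ne_zero.mpr him
      positivity
    nlinarith [sq_nonneg (u + x), sq_nonneg (v - y)]
  have hc' : c * (1 + a * b) = a + b := by
    rw [hc]; field_simp
  have E3 : c.re * (1 + (x*u - y*v)) - c.im * (x*v + y*u) = x + u := by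
    have := congrArg Complex.re hc'
    simp [Complex.mul_re, Complex.add_re, Complex.add_im, Complex.mul_im] at this
    linarith [this]
  have E4 : c.re * (x*v + y*u) + c.im * (1 + (x*u - y*v)) = y + v := by
    have := congrArg Complex.im hc'
    simp [Complex.mul_re, Complex.add_re, Complex.add_im, Complex.mul_im] at this
    linarith [this]
  have hD : (1 + (x*u - y*v))^2 + (x*v + y*u)^2 ≠ 0 := by
    have h := Complex.normSq_pos.mpr hab
    rw [Complex.normSq_apply] at h
    simp [Complex.add_re, Complex.add_im, Complex.mul_re, Complex.mul_im] at h
    intro h0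
    nlinarith [h, h0]
  have hci : c.im = 0 := by
    have hcd : c.im * ((1 + (x*u - y*v))^2 + (x*v + y*u)^2) = 0 := by
      linear_combination (1 + (x*u - y*v)) * E4 - (x*v + y*u) * E3 - y * hnb - v * hna
    exact (mul_eq_zero.mp hcd).resolve_right hD
  have E4' : c.re * (x*v + y*u) = y + v := by
    rw [hci] at E4; linarith
  have hp : x*v + y*u ≠ 0 := by
    intro h0
    rw [h0, mul_zero] at E4'
    exact hyv E4'.symm
  set q := ‖a - conj b‖ with hq
  set s := Real.sqrt (y * v) with hs
  have hm' : m * (((y + v : ℝ) : ℂ)) = (((x*v + y*u : ℝ) : ℂ)) + Complex.I * ((q * s : ℝ) : ℂ) := by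
    rw [hm]
    have h1 : (a*b).im = x*v + y*u := by rw [Complex.mul_im]
    have h2 : (a+b).im = y + v := by rw [Complex.add_im]
    rw [h1, h2, div_mul_cancel₀]
    exact_mod_cast hyv
  have E1 : m.re * (y + v) = x*v + y*u := by
    have := congrArg Complex.re hm'
    simpa [Complex.mul_re, Complex.add_re, Complex.mul_im] using this
  have E2 : m.im * (y + v) = q * s := by
    have := congrArg Complex.im hm'
    simpa [Complex.mul_im, Complex.add_im, Complex.mul_re] using this
  have hq2 : q^2 = (x - u)^2 + (y + v)^2 := by
    rw [hq, Complex.sq_norm, Complex.normSq_apply]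
    simp [Complex.sub_re, Complex.sub_im]
    ring
  have hs2 : s * s = y * v := Real.mul_self_sqrt (by positivity)
  have key : (x*v + y*u)^2 + q^2 * (s * s) = (y + v)^2 := by
    rw [hq2, hs2]
    linear_combination (v^2 + y*v) * hna + (y^2 + y*v) * hnb
  have hmr : m.re = (x*v + y*u) / (y + v) := by
    field_simp
    linarith [E1]
  have hmi : m.im = q * s / (y + v) := by
    field_simp
    linarith [E2]
  have hcr : c.re = (y + v) / (x*v + y*u) := by
    rw [eq_div_iff hp]
    linarith [E4']
  simp only [Complex.mul_re, Complex.conj_re, Complex.conj_im, Complex.sub_re, Complex.sub_im]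
  rw [hmr, hmi, hcr, hci]
  field_simp
  linear_combination key
end

section
/- Let a, b ∈ ℂ with |a| = |b| = 1, Im(a) > 0, Im(b) > 0, and let k ∈ (−1, 1). Suppose ya, yb ∈ ℂ satisfy |ya| = |yb| = 1, Im(ya) < 0, Im(yb) < 0, the three points a, k, ya are collinear, and the three points b, k, yb are collinear. Then ρ(a, b) = ρ( conj(ya), conj(yb) ). -/
open Complex ComplexConjugate

lemma key_rel (k : ℝ) (a ya : ℂ) (ha : ‖a‖ = 1) (hya : ‖ya‖ = 1)
    (hia : 0 < a.im) (hiya : ya.im < 0)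
    (hcol : Collinear ℝ ({a, (k : ℂ), ya} : Set ℂ)) :
    ya * (1 - (k:ℂ) * a) = (k:ℂ) - a := by
  have hak : a ≠ (k:ℂ) := by
    intro h
    rw [h] at hia
    simp at hia
  have h1 : a * conj a = 1 := by
    rw [Complex.mul_conj]
    norm_cast
    rw [← Complex.sq_norm, ha]; ring
  have h2 : ya * conj ya = 1 := by
    rw [Complex.mul_conj]
    norm_cast
    rw [← Complex.sq_norm, hya]; ring
  obtain ⟨v, hv⟩ := (collinear_iff_of_mem (by simp : (k:ℂ) ∈ ({a, (k:ℂ), ya} : Set ℂ))).1 hcol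
  obtain ⟨r1, hr1⟩ := hv a (by simp)
  obtain ⟨r2, hr2⟩ := hv ya (by simp)
  have hr1ne : r1 ≠ 0 := by
    intro h
    rw [h] at hr1
    simp at hr1
    exact hak hr1
  set s : ℝ := r2 / r1 with hs_def
  have hv' : (r1:ℂ) * v = a - k := by
    rw [hr1]; simp [Complex.real_smul]
  have hya2 : ya - k = (r2:ℂ) * v := by
    rw [hr2]; simp [Complex.real_smul]
  have hs : ya = (s:ℂ) * (a - k) + k := by
    have : ya - k = (s:ℂ) * (a - k) := by
      rw [hya2, ← hv']
      have : (r1:ℂ) ≠ 0 := by exact_mod_cast hr1ne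
      rw [hs_def, Complex.ofReal_div]
      field_simp
    linear_combination this
  have him : ya.im = s * a.im := by
    rw [hs]
    simp [Complex.add_im, Complex.mul_im]
  have hs_neg : s < 0 := by nlinarith
  have hs_ne : (s:ℂ) - 1 ≠ 0 := by
    intro h
    have : (s:ℂ) = 1 := by linear_combination h
    have : s = (1:ℝ) := by exact_mod_cast this
    linarith
  have hconj : conj ya = (s:ℂ) * (conj a - k) + k := by
    rw [hs]
    simp [map_add, map_mul, map_sub, Complex.conj_ofReal]
  have hquad : ((s:ℂ) * (a - k) + k) * ((s:ℂ) * (conj a - k) + k) = 1 := by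
    rw [← hs, ← hconj]; exact h2
  have hfac : ((s:ℂ) - 1) * ((s:ℂ) * ((a - k) * (conj a - k)) - ((k:ℂ)^2 - 1)) = 0 := by
    linear_combination hquad - (s:ℂ) * h1
  have key : (s:ℂ) * ((a - k) * (conj a - k)) = (k:ℂ)^2 - 1 := by
    rcases mul_eq_zero.1 hfac with h | h
    · exact absurd h hs_ne
    · linear_combination h
  linear_combination (1 - (k:ℂ) * a) * hs + a * key - (s:ℂ) * (a - k) * h1

theorem rhoH_reflection_invariance (a b : ℂ)
    (ha : ‖a‖ = 1) (hb : ‖b‖ = 1)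
    (hia : 0 < a.im) (hib : 0 < b.im)
    (k : ℝ) (hk : -1 < k) (hk' : k < 1)
    (ya yb : ℂ) (hya : ‖ya‖ = 1) (hyb : ‖yb‖ = 1)
    (hiya : ya.im < 0) (hiyb : yb.im < 0)
    (hcol1 : Collinear ℝ ({a, (k : ℂ), ya} : Set ℂ))
    (hcol2 : Collinear ℝ ({b, (k : ℂ), yb} : Set ℂ)) :
    rhoH a b = rhoH (conj ya) (conj yb) := by
  have hka := key_rel k a ya ha hya hia hiya hcol1
  have hkb := key_rel k b yb hb hyb hib hiyb hcol2
  have h1a : a * conj a = 1 := by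
    rw [Complex.mul_conj]; norm_cast; rw [← Complex.sq_norm, ha]; ring
  have h1b : b * conj b = 1 := by
    rw [Complex.mul_conj]; norm_cast; rw [← Complex.sq_norm, hb]; ring
  -- conjugated relations
  have hka' : conj ya * (1 - (k:ℂ) * conj a) = (k:ℂ) - conj a := by
    have := congrArg (starRingEnd ℂ) hka
    simpa [map_mul, map_sub, map_one, Complex.conj_ofReal] using this
  have hkb' : conj yb * (1 - (k:ℂ) * conj b) = (k:ℂ) - conj b := by
    have := congrArg (starRingEnd ℂ) hkb
    simpa [map_mul, map_sub, map_one, Complex.conj_ofReal] using this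
  have E1 : conj ya * (a - k) = (k:ℂ) * a - 1 := by
    linear_combination a * hka' + ((k:ℂ) * conj ya - 1) * h1a
  have E2 : conj yb * (b - k) = (k:ℂ) * b - 1 := by
    linear_combination b * hkb' + ((k:ℂ) * conj yb - 1) * h1b
  have I1 : (conj ya - conj yb) * ((a - k) * (b - k)) = (1 - (k:ℂ)^2) * (a - b) := by
    linear_combination (b - k) * E1 - (a - k) * E2
  have I2 : (conj ya - yb) * ((a - k) * (1 - (k:ℂ) * b)) = (1 - (k:ℂ)^2) * b * (a - conj b) := by
    linear_combination (1 - (k:ℂ) * b) * E1 - (a - k) * hkb + (1 - (k:ℂ)^2) * h1b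
  -- abs facts
  have hak : a - (k:ℂ) ≠ 0 := by
    intro h
    have : a = (k:ℂ) := by linear_combination h
    rw [this] at hia; simp at hia
  have hbk : b - (k:ℂ) ≠ 0 := by
    intro h
    have : b = (k:ℂ) := by linear_combination h
    rw [this] at hib; simp at hib
  have hkk : (1 : ℂ) - (k:ℂ)^2 ≠ 0 := by
    intro h
    have h2 : ((1 - k^2 : ℝ) : ℂ) = 0 := by push_cast; linear_combination h
    have : (1 - k^2 : ℝ) = 0 := by exact_mod_cast h2
    nlinarith
  have h1kb : ‖1 - (k:ℂ) * b‖ = ‖b - k‖ := by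
    have e : (1:ℂ) - (k:ℂ) * b = (conj b - k) * b := by linear_combination -h1b
    have e2 : conj b - (k:ℂ) = conj (b - k) := by
      simp [map_sub, Complex.conj_ofReal]
    rw [e, norm_mul, e2, Complex.norm_conj, hb, mul_one]
  have habs1 : ‖conj ya - conj yb‖ * (‖a - k‖ * ‖b - k‖)
      = ‖1 - (k:ℂ)^2‖ * ‖a - b‖ := by
    have := congrArg norm I1
    simpa [norm_mul] using this
  have habs2 : ‖conj ya - yb‖ * (‖a - k‖ * ‖b - k‖)
      = ‖1 - (k:ℂ)^2‖ * ‖a - conj b‖ := by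
    have := congrArg norm I2
    simp only [norm_mul] at this
    rw [h1kb, hb] at this
    linarith [this]
  -- positivity
  have dak : 0 < ‖a - k‖ := by simpa [norm_pos_iff] using hak
  have dbk : 0 < ‖b - k‖ := by simpa [norm_pos_iff] using hbk
  have dkk : 0 < ‖1 - (k:ℂ)^2‖ := by simpa [norm_pos_iff] using hkk
  have dacb : 0 < ‖a - conj b‖ := by
    rw [norm_pos_iff]
    intro h
    have : (a - conj b).im = 0 := by rw [h]; simp
    simp [Complex.sub_im, Complex.conj_im] at this
    linarith
  have dcyy : 0 < ‖conj ya - yb‖ := by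
    rw [norm_pos_iff]
    intro h
    have : (conj ya - yb).im = 0 := by rw [h]; simp
    simp [Complex.sub_im, Complex.conj_im] at this
    linarith
  -- ratio equality
  have hratio : ‖a - b‖ / ‖a - conj b‖
      = ‖conj ya - conj yb‖ / ‖conj ya - yb‖ := by
    rw [div_eq_div_iff dacb.ne' dcyy.ne']
    have hD : (‖a - k‖ * ‖b - k‖) ≠ 0 := by positivity
    apply mul_right_cancel₀ hD
    linear_combination ‖a - b‖ * habs2 - ‖a - conj b‖ * habs1
  rw [rhoH, rhoH, Complex.conj_conj, hratio]
end
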